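/- arXiv:2603.28256 — 7 statements merged into one kernel-verified Lean document; each statement's English description precedes it below -/
import Mathlib

section
/- Let f : ℝ → ℝ be twice continuously differentiable on (0,1] with f(y) > 0 and f'(y) > 0 for all y ∈ (0,1], and suppose f(y) → 0 as y → 0⁺. Define T_{1/f}(y) := f''(y)/f'(y) − 2 f'(y)/f(y). Then the integral of y·T_{1/f}(y)² over (0,1) is infinite, i.e., ∫⁻_{(0,1)} ENNReal.ofReal( y·T_{1/f}(y)² ) dy = ∞. -/
open Set MeasureTheory

/-- If `f` is twice continuously differentiable on `(0,1]` with `f > 0`, `f' > 0`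
there, and `f(y) → 0` as `y → 0⁺`, then `∫_0^1 y · T_{1/f}(y)² dy = ∞`, where
`T_{1/f} = f''/f' - 2 f'/f`. -/
theorem stmt1 (f f' f'' : ℝ → ℝ)
    (hf' : ∀ y ∈ Set.Ioc (0:ℝ) 1, HasDerivWithinAt f (f' y) (Set.Ioc (0:ℝ) 1) y)
    (hf'' : ∀ y ∈ Set.Ioc (0:ℝ) 1, HasDerivWithinAt f' (f'' y) (Set.Ioc (0:ℝ) 1) y)
    (hcont : ContinuousOn f'' (Set.Ioc (0:ℝ) 1))
    (hfpos : ∀ y ∈ Set.Ioc (0:ℝ) 1, 0 < f y)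
    (hf'pos : ∀ y ∈ Set.Ioc (0:ℝ) 1, 0 < f' y)
    (hlim : Filter.Tendsto f (nhdsWithin 0 (Set.Ioi 0)) (nhds 0)) :
    ∫⁻ y in Set.Ioo (0:ℝ) 1,
        ENNReal.ofReal (y * (f'' y / f' y - 2 * f' y / f y) ^ 2) = ⊤ := by
  set s : Set ℝ := Set.Ioc (0:ℝ) 1 with hs
  set I : ℝ → ℝ := fun y => y * (f'' y / f' y - 2 * f' y / f y) ^ 2 with hI
  set φ : ℝ → ℝ := fun y => y * f' y / f y - Real.log (f y) with hφ
  set D : ℝ → ℝ := fun y => y * (f'' y * f y - f' y ^ 2) / f y ^ 2 with hD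
  have hne : ∀ y ∈ s, f y ≠ 0 := fun y hy => ne_of_gt (hfpos y hy)
  have hne' : ∀ y ∈ s, f' y ≠ 0 := fun y hy => ne_of_gt (hf'pos y hy)
  -- continuity facts
  have hfc : ContinuousOn f s := fun y hy => (hf' y hy).continuousWithinAt
  have hf'c : ContinuousOn f' s := fun y hy => (hf'' y hy).continuousWithinAt
  have hφc : ContinuousOn φ s :=
    ((continuousOn_id.mul hf'c).div hfc hne).sub (hfc.log hne)
  have hDc : ContinuousOn D s :=
    (continuousOn_id.mul ((hcont.mul hfc).sub (hf'c.pow 2))).div (hfc.pow 2)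
      (fun y hy => pow_ne_zero 2 (hne y hy))
  have hIc : ContinuousOn I s :=
    continuousOn_id.mul
      (((hcont.div hf'c hne').sub ((continuousOn_const.mul hf'c).div hfc hne)).pow 2)
  -- derivative of φ
  have hφd : ∀ y ∈ s, HasDerivWithinAt φ (D y) s y := by
    intro y hy
    have h1 : HasDerivWithinAt (fun y => y * f' y) (1 * f' y + y * f'' y) s y :=
      (hasDerivWithinAt_id y s).mul (hf'' y hy)
    have h2 : HasDerivWithinAt (fun y => y * f' y / f y)
        (((1 * f' y + y * f'' y) * f y - y * f' y * f' y) / f y ^ 2) s y :=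
      h1.div (hf' y hy) (hne y hy)
    have h3 : HasDerivWithinAt (fun y => Real.log (f y)) (f' y / f y) s y :=
      (hf' y hy).log (hne y hy)
    have := h2.sub h3
    refine this.congr_deriv (Eq.symm ?_)
    show y * (f'' y * f y - f' y ^ 2) / f y ^ 2 = _
    have h0 := hne y hy
    rw [div_sub_div _ _ (pow_ne_zero 2 h0) h0,
      div_eq_div_iff (pow_ne_zero 2 h0) (mul_ne_zero (pow_ne_zero 2 h0) h0)]
    ring
  -- pointwise inequality
  have hpt : ∀ y ∈ s, -(4 * D y) ≤ I y := by
    intro y hy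
    have h0 := hne y hy
    have h0' := hne' y hy
    have hkey : I y + 4 * D y = y * (f'' y / f' y) ^ 2 := by
      simp only [hI, hD]
      field_simp
      ring
    have hpos : 0 ≤ y * (f'' y / f' y) ^ 2 := mul_nonneg hy.1.le (sq_nonneg _)
    linarith
  -- main estimate for each ε ∈ Ioo 0 1
  have hmain : ∀ ε ∈ Ioo (0:ℝ) 1, 4 * φ ε - 4 * φ 1 ≤ ∫ y in Ioo ε 1, I y := by
    intro ε hε
    have hsub : Icc ε 1 ⊆ s := fun x hx => ⟨lt_of_lt_of_le hε.1 hx.1, hx.2⟩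
    have hle : ε ≤ 1 := hε.2.le
    have hintD : IntervalIntegrable D volume ε 1 :=
      (hDc.mono hsub).intervalIntegrable_of_Icc hle
    have hftc : ∫ y in ε..1, D y = φ 1 - φ ε := by
      apply intervalIntegral.integral_eq_sub_of_hasDeriv_right_of_le hle
        (hφc.mono hsub) _ hintD
      intro x hx
      have hxs : x ∈ s := ⟨hε.1.trans hx.1, hx.2.le⟩
      exact (((hφd x hxs).hasDerivAt (Ioc_mem_nhds_iff.2 ⟨hxs.1, hx.2⟩)).hasDerivWithinAt)
    have hintI : IntervalIntegrable I volume ε 1 :=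
      (hIc.mono hsub).intervalIntegrable_of_Icc hle
    have hmono : ∫ y in ε..1, -(4 * D y) ≤ ∫ y in ε..1, I y := by
      apply intervalIntegral.integral_mono_on hle ((hintD.const_mul 4).neg) hintI
      exact fun x hx => hpt x (hsub hx)
    have hleft : ∫ y in ε..1, -(4 * D y) = 4 * φ ε - 4 * φ 1 := by
      rw [intervalIntegral.integral_neg, intervalIntegral.integral_const_mul, hftc]
      ring
    have heq : ∫ y in ε..1, I y = ∫ y in Ioo ε 1, I y := by
      rw [intervalIntegral.integral_of_le hle, integral_Ioc_eq_integral_Ioo]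
    linarith [hmono, hleft.symm.le, heq.le]
  -- conclude
  apply ENNReal.eq_top_of_forall_nnreal_le
  intro r
  have hmem : ∀ᶠ y in nhdsWithin (0:ℝ) (Set.Ioi 0), y ∈ Ioo (0:ℝ) 1 :=
    Ioo_mem_nhdsGT_of_mem ⟨le_refl 0, one_pos⟩
  have hlog : Filter.Tendsto (fun y => Real.log (f y)) (nhdsWithin (0:ℝ) (Set.Ioi 0))
      Filter.atBot := by
    apply Real.tendsto_log_nhdsGT_zero.comp
    rw [tendsto_nhdsWithin_iff]
    refine ⟨hlim, ?_⟩
    filter_upwards [hmem] with y hy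
    exact hfpos y ⟨hy.1, hy.2.le⟩
  have hev : ∀ᶠ y in nhdsWithin (0:ℝ) (Set.Ioi 0),
      Real.log (f y) ≤ -((r : ℝ) / 4 + φ 1) :=
    hlog.eventually (Filter.eventually_le_atBot _)
  obtain ⟨ε, hεlog, hεmem⟩ := (hev.and hmem).exists
  have hεs : ε ∈ s := ⟨hεmem.1, hεmem.2.le⟩
  have hφε : (r : ℝ) ≤ 4 * φ ε - 4 * φ 1 := by
    have h1 : 0 ≤ ε * f' ε / f ε :=
      div_nonneg (mul_nonneg hεmem.1.le (hf'pos ε hεs).le) (hfpos ε hεs).le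
    simp only [hφ] at *
    linarith
  have hr : (r : ℝ) ≤ ∫ y in Ioo ε 1, I y := hφε.trans (hmain ε hεmem)
  have hIntOn : IntegrableOn I (Ioo ε 1) volume := by
    have hsub : Icc ε 1 ⊆ s := fun x hx => ⟨lt_of_lt_of_le hεmem.1 hx.1, hx.2⟩
    exact ((hIc.mono hsub).integrableOn_Icc).mono_set Ioo_subset_Icc_self
  have hnn : 0 ≤ᵐ[volume.restrict (Ioo ε 1)] I :=
    (ae_restrict_iff' measurableSet_Ioo).2
      (Filter.Eventually.of_forall fun y hy => mul_nonneg (hεmem.1.trans hy.1).le (sq_nonneg _))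
  calc (r : ENNReal) = ENNReal.ofReal r := (ENNReal.ofReal_coe_nnreal).symm
    _ ≤ ENNReal.ofReal (∫ y in Ioo ε 1, I y) := ENNReal.ofReal_le_ofReal hr
    _ = ∫⁻ y in Ioo ε 1, ENNReal.ofReal (I y) :=
        ofReal_integral_eq_lintegral_ofReal hIntOn hnn
    _ ≤ ∫⁻ y in Ioo (0:ℝ) 1, ENNReal.ofReal (I y) :=
        lintegral_mono_set (Ioo_subset_Ioo hεmem.1.le le_rfl)
end

section
/- Let f : ℝ → ℝ be twice continuously differentiable on (0,1] with f(y) > 0 and f'(y) < 0 for all y ∈ (0,1], and suppose f(y) → +∞ as y → 0⁺. Define T_f(y) := f''(y)/f'(y). Then the integral of y·T_f(y)² over (0,1) is infinite, i.e., ∫⁻_{(0,1)} ENNReal.ofReal( y·T_f(y)² ) dy = ∞. -/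
open Set MeasureTheory

/-- If `f` is twice continuously differentiable on `(0,1]` with `f > 0`, `f' < 0`
there, and `f(y) → +∞` as `y → 0⁺`, then `∫_0^1 y · T_f(y)² dy = ∞`, where
`T_f = f''/f'`. -/
theorem stmt2 (f f' f'' : ℝ → ℝ)
    (hf' : ∀ y ∈ Set.Ioc (0:ℝ) 1, HasDerivWithinAt f (f' y) (Set.Ioc (0:ℝ) 1) y)
    (hf'' : ∀ y ∈ Set.Ioc (0:ℝ) 1, HasDerivWithinAt f' (f'' y) (Set.Ioc (0:ℝ) 1) y)
    (hcont : ContinuousOn f'' (Set.Ioc (0:ℝ) 1))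
    (hfpos : ∀ y ∈ Set.Ioc (0:ℝ) 1, 0 < f y)
    (hf'neg : ∀ y ∈ Set.Ioc (0:ℝ) 1, f' y < 0)
    (hlim : Filter.Tendsto f (nhdsWithin 0 (Set.Ioi 0)) Filter.atTop) :
    ∫⁻ y in Set.Ioo (0:ℝ) 1,
        ENNReal.ofReal (y * (f'' y / f' y) ^ 2) = ⊤ := by
  set φ : ℝ → ℝ := fun y => 4 * y * ((f'' y * f y - f' y * f' y) / (f y) ^ 2) with hφdef
  set H : ℝ → ℝ := fun y => 4 * (y * (f' y / f y) - Real.log (f y)) with hHdef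
  set T : ℝ → ℝ := fun y => y * (f'' y / f' y) ^ 2 with hTdef
  have hfne : ∀ y ∈ Ioc (0:ℝ) 1, f y ≠ 0 := fun y hy => (hfpos y hy).ne'
  have hf'ne : ∀ y ∈ Ioc (0:ℝ) 1, f' y ≠ 0 := fun y hy => (hf'neg y hy).ne
  have hcf : ContinuousOn f (Ioc 0 1) := fun x hx => (hf' x hx).continuousWithinAt
  have hcf' : ContinuousOn f' (Ioc 0 1) := fun x hx => (hf'' x hx).continuousWithinAt
  have hcφ : ContinuousOn φ (Ioc 0 1) := by
    apply (continuousOn_const.mul continuousOn_id).mul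
    exact ((hcont.mul hcf).sub (hcf'.mul hcf')).div (hcf.pow 2)
      (fun y hy => pow_ne_zero 2 (hfne y hy))
  have hcH : ContinuousOn H (Ioc 0 1) := by
    apply continuousOn_const.mul
    exact (continuousOn_id.mul (hcf'.div hcf hfne)).sub (hcf.log hfne)
  have hcT : ContinuousOn T (Ioc 0 1) :=
    continuousOn_id.mul ((hcont.div hcf' hf'ne).pow 2)
  -- derivative of H
  have hHd : ∀ x ∈ Ioo (0:ℝ) 1, HasDerivAt H (φ x) x := by
    intro x hx
    have hx1 : x ∈ Ioc (0:ℝ) 1 := ⟨hx.1, hx.2.le⟩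
    have hmem : Ioc (0:ℝ) 1 ∈ nhds x := Ioc_mem_nhds hx.1 hx.2
    have hfA : HasDerivAt f (f' x) x := (hf' x hx1).hasDerivAt hmem
    have hf'A : HasDerivAt f' (f'' x) x := (hf'' x hx1).hasDerivAt hmem
    have hne := hfne x hx1
    have hq : HasDerivAt (fun y => f' y / f y)
        ((f'' x * f x - f' x * f' x) / (f x) ^ 2) x := hf'A.div hfA hne
    have hl : HasDerivAt (fun y => Real.log (f y)) (f' x / f x) x := hfA.log hne
    have hm : HasDerivAt (fun y => y * (f' y / f y))
        (1 * (f' x / f x) + x * ((f'' x * f x - f' x * f' x) / (f x) ^ 2)) x :=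
      (hasDerivAt_id x).mul hq
    have h2 := ((hm.sub hl).const_mul (4:ℝ))
    convert h2 using 1
    · rfl
    · rfl
    · rfl
    simp [hφdef]; ring
  -- pointwise inequality  φ ≤ T  on Ioc 0 1
  have hφT : ∀ y ∈ Ioc (0:ℝ) 1, φ y ≤ T y := by
    intro y hy
    have hne := hfne y hy
    have h'ne := hf'ne y hy
    have key : T y - φ y = y * (f'' y / f' y - 2 * (f' y / f y)) ^ 2 := by
      simp only [hTdef, hφdef]
      field_simp
      ring
    nlinarith [sq_nonneg (f'' y / f' y - 2 * (f' y / f y)), hy.1.le,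
      mul_nonneg hy.1.le (sq_nonneg (f'' y / f' y - 2 * (f' y / f y)))]
  -- the main estimate for each ε
  have main : ∀ ε ∈ Ioo (0:ℝ) 1,
      ENNReal.ofReal (H 1 + 4 * Real.log (f ε)) ≤
        ∫⁻ y in Set.Ioo (0:ℝ) 1, ENNReal.ofReal (T y) := by
    intro ε hε
    have hεIcc : Icc ε 1 ⊆ Ioc (0:ℝ) 1 := fun x hx => ⟨lt_of_lt_of_le hε.1 hx.1, hx.2⟩
    have hεIoo : Ioo ε 1 ⊆ Ioc (0:ℝ) 1 := fun x hx => ⟨lt_trans hε.1 hx.1, hx.2.le⟩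
    -- FTC
    have hint : IntervalIntegrable φ volume ε 1 := by
      apply ContinuousOn.intervalIntegrable
      rw [uIcc_of_le hε.2.le]
      exact hcφ.mono hεIcc
    have hftc : ∫ y in ε..1, φ y = H 1 - H ε := by
      apply intervalIntegral.integral_eq_sub_of_hasDeriv_right_of_le hε.2.le
        (hcH.mono ((uIcc_of_le hε.2.le) ▸ hεIcc))
      · intro x hx
        exact (hHd x ⟨lt_trans hε.1 hx.1, hx.2⟩).hasDerivWithinAt
      · exact hint
    have hIooφ : ∫ y in Ioo ε 1, φ y = H 1 - H ε := by
      rw [← MeasureTheory.integral_Ioc_eq_integral_Ioo,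
        ← intervalIntegral.integral_of_le hε.2.le]
      exact hftc
    -- integrability of T and φ on Ioo ε 1
    have hTi : IntegrableOn T (Ioo ε 1) := by
      apply ((hcT.mono hεIcc).integrableOn_Icc).mono_set Ioo_subset_Icc_self
    have hφi : IntegrableOn φ (Ioo ε 1) := by
      apply ((hcφ.mono hεIcc).integrableOn_Icc).mono_set Ioo_subset_Icc_self
    -- compare integrals
    have hmono : ∫ y in Ioo ε 1, φ y ≤ ∫ y in Ioo ε 1, T y :=
      setIntegral_mono_on hφi hTi measurableSet_Ioo (fun x hx => hφT x (hεIoo hx))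
    -- H 1 - H ε ≥ H 1 + 4 log f ε
    have hHε : H 1 + 4 * Real.log (f ε) ≤ H 1 - H ε := by
      have hεm : ε ∈ Ioc (0:ℝ) 1 := ⟨hε.1, hε.2.le⟩
      have h1 : f' ε / f ε < 0 := div_neg_of_neg_of_pos (hf'neg ε hεm) (hfpos ε hεm)
      have h2 : ε * (f' ε / f ε) ≤ 0 := mul_nonpos_of_nonneg_of_nonpos hε.1.le h1.le
      simp only [hHdef]
      nlinarith
    -- nonnegativity of T on Ioo ε 1
    have hTnn : 0 ≤ᵐ[volume.restrict (Ioo ε 1)] T := by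
      filter_upwards [ae_restrict_mem measurableSet_Ioo] with x hx
      have : (0:ℝ) < x := lt_trans hε.1 hx.1
      positivity
    calc ENNReal.ofReal (H 1 + 4 * Real.log (f ε))
        ≤ ENNReal.ofReal (∫ y in Ioo ε 1, T y) := by
          apply ENNReal.ofReal_le_ofReal
          calc H 1 + 4 * Real.log (f ε) ≤ H 1 - H ε := hHε
            _ = ∫ y in Ioo ε 1, φ y := hIooφ.symm
            _ ≤ _ := hmono
      _ = ∫⁻ y in Ioo ε 1, ENNReal.ofReal (T y) :=
          MeasureTheory.ofReal_integral_eq_lintegral_ofReal hTi hTnn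
      _ ≤ ∫⁻ y in Ioo (0:ℝ) 1, ENNReal.ofReal (T y) :=
          lintegral_mono_set (fun x hx => ⟨lt_trans hε.1 hx.1, hx.2⟩)
  -- conclude by sending ε → 0
  by_contra hI
  set I := ∫⁻ y in Set.Ioo (0:ℝ) 1, ENNReal.ofReal (T y) with hIdef
  have hIne : I ≠ ⊤ := hI
  set M : ℝ := (I.toReal + 1 - H 1) / 4 with hM
  have hev1 : ∀ᶠ ε in nhdsWithin 0 (Set.Ioi 0), Real.exp M ≤ f ε :=
    hlim.eventually_ge_atTop (Real.exp M)
  have hev2 : ∀ᶠ ε in nhdsWithin 0 (Set.Ioi 0), ε ∈ Ioo (0:ℝ) 1 :=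
    Filter.eventually_of_mem (Ioo_mem_nhdsGT_of_mem (by simp : (0:ℝ) ∈ Ico (0:ℝ) 1))
      (fun x hx => hx)
  obtain ⟨ε, hεf, hεm⟩ := (hev1.and hev2).exists
  have hfε : 0 < f ε := hfpos ε ⟨hεm.1, hεm.2.le⟩
  have hlog : M ≤ Real.log (f ε) := (Real.le_log_iff_exp_le hfε).2 hεf
  have hb := main ε hεm
  have : I.toReal + 1 ≤ I.toReal := by
    have h1 : I.toReal + 1 ≤ H 1 + 4 * Real.log (f ε) := by
      rw [hM] at hlog; nlinarith
    have h2 : ENNReal.ofReal (I.toReal + 1) ≤ I :=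
      le_trans (ENNReal.ofReal_le_ofReal h1) hb
    have := (ENNReal.ofReal_le_iff_le_toReal hIne).1 h2
    linarith [this]
  linarith
end

section
/- Let κ : ℝ → ℝ be a continuous nondecreasing function with κ(u) = κ(0) for u ≤ 0, let S : ℝ → ℝ be continuous with S(u) > 0 for all u ≥ 0, and let n₀ > 0. Define n(t) := n₀·exp( −∫_{(0,t]} S(u)^{−1} d(μ_κ)(u) ) for t ≥ 0, where μ_κ is the Lebesgue–Stieltjes measure of κ. Then for every t ≥ 0, n₀ − n(t) = ∫_{(0,t]} ( n(u)/S(u) ) d(μ_κ)(u). -/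
open Set MeasureTheory Filter
open scoped ENNReal Topology

set_option maxHeartbeats 1600000

private lemma seq_le {n m : ℕ} (hnm : n ≤ m) : (1:ℝ)/(m+1) ≤ 1/(n+1) := by
  apply one_div_le_one_div_of_le (by positivity)
  have : (n:ℝ) ≤ m := Nat.cast_le.2 hnm
  linarith

private lemma measLow (ρ : Measure ℝ) [IsFiniteMeasure ρ] [NullSingletonClass ρ]
    (h0 : ρ (Iic 0) = 0) (s : ℝ) :
    ρ {u | (ρ (Iic u)).toReal < s} = ENNReal.ofReal (min s (ρ univ).toReal) := by
  set F : ℝ → ℝ := fun u => (ρ (Iic u)).toReal with hF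
  set M : ℝ := (ρ univ).toReal with hM
  have hF0 : F 0 = 0 := by simp [hF, h0]
  have hFnn : ∀ u, 0 ≤ F u := fun u => ENNReal.toReal_nonneg
  have hFmono : Monotone F := fun u v huv =>
    ENNReal.toReal_mono (measure_ne_top _ _) (measure_mono (Iic_subset_Iic.2 huv))
  have hofF : ∀ u, ρ (Iic u) = ENNReal.ofReal (F u) := fun u =>
    (ENNReal.ofReal_toReal (measure_ne_top _ _)).symm
  have hofM : ρ univ = ENNReal.ofReal M := (ENNReal.ofReal_toReal (measure_ne_top _ _)).symm
  have hFM : ∀ u, F u ≤ M :=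
    fun u => ENNReal.toReal_mono (measure_ne_top _ _) (measure_mono (subset_univ _))
  rcases le_or_gt s 0 with hs | hs
  · have hempty : {u | F u < s} = ∅ := by
      apply eq_empty_iff_forall_notMem.2
      intro u hu
      exact absurd (lt_of_lt_of_le hu hs) (not_lt.2 (hFnn u))
    rw [hempty]
    have : min s M ≤ 0 := le_trans (min_le_left _ _) hs
    simp [ENNReal.ofReal_eq_zero.2 this]
  · by_cases hb : ∃ b, s ≤ F b
    · obtain ⟨b, hbs⟩ := hb
      set A : Set ℝ := {u | F u < s} with hA
      have hAne : (0:ℝ) ∈ A := by simpa [hA, hF0] using hs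
      have hbdd : BddAbove A := by
        refine ⟨b, fun u hu => ?_⟩
        by_contra hbu
        push_neg at hbu
        exact absurd (hbs.trans (hFmono hbu.le)) (not_le.2 hu)
      set c : ℝ := sSup A with hc
      have hIio : Iio c ⊆ A := by
        intro u hu
        obtain ⟨v, hvA, huv⟩ := exists_lt_of_lt_csSup ⟨0, hAne⟩ hu
        exact lt_of_le_of_lt (hFmono huv.le) hvA
      have hsubIic : A ⊆ Iic c := fun u hu => le_csSup hbdd hu
      -- right-continuity at c : s ≤ F c
      have hge : s ≤ F c := by
        have h1 : ∀ k : ℕ, ENNReal.ofReal s ≤ ρ (Iic (c + 1/(k+1))) := by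
          intro k
          have hck : c + 1/(k+1) ∉ A := by
            intro h
            have := le_csSup hbdd h
            nlinarith [one_div_pos.2 (by positivity : (0:ℝ) < (k:ℝ)+1)]
          have : s ≤ F (c + 1/(k+1)) := not_lt.1 hck
          rw [hofF]
          exact ENNReal.ofReal_le_ofReal this
        have hiInter : Iic c = ⋂ k : ℕ, Iic (c + 1/(k+1)) := by
          ext x
          simp only [mem_Iic, mem_iInter]
          constructor
          · intro h k
            have : (0:ℝ) < 1/((k:ℝ)+1) := by positivity
            linarith
          · intro h
            by_contra hx
            push_neg at hx
            obtain ⟨k, hk⟩ := exists_nat_one_div_lt (by linarith : (0:ℝ) < x - c)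
            have := h k
            push_cast at hk this ⊢
            linarith
        have h2 : Tendsto (fun k : ℕ => ρ (Iic (c + 1/(k+1)))) atTop (𝓝 (ρ (Iic c))) := by
          rw [hiInter]
          exact tendsto_measure_iInter_atTop
            (fun k => measurableSet_Iic.nullMeasurableSet)
            (fun k m hkm => Iic_subset_Iic.2 (by linarith [seq_le hkm]))
            ⟨0, measure_ne_top _ _⟩
        have h3 : ENNReal.ofReal s ≤ ρ (Iic c) := ge_of_tendsto h2 (Eventually.of_forall h1)
        rw [hofF] at h3
        exact (ENNReal.ofReal_le_ofReal_iff (hFnn c)).1 h3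
      have hcA : c ∉ A := fun h => absurd h (by simp [hA, not_lt, hge])
      have hAeq : A = Iio c := by
        apply subset_antisymm _ hIio
        intro u hu
        have h1 : u ≤ c := hsubIic hu
        have h2 : u ≠ c := by rintro rfl; exact hcA hu
        exact lt_of_le_of_ne h1 h2
      -- left-continuity at c : F c ≤ s
      have hle : F c ≤ s := by
        have hiUnion : Iio c = ⋃ k : ℕ, Iic (c - 1/(k+1)) := by
          ext x
          simp only [mem_Iio, mem_iUnion, mem_Iic]
          constructor
          · intro h
            obtain ⟨k, hk⟩ := exists_nat_one_div_lt (by linarith : (0:ℝ) < c - x)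
            refine ⟨k, by push_cast at hk ⊢; linarith⟩
          · intro ⟨k, hk⟩
            have : (0:ℝ) < 1/((k:ℝ)+1) := by positivity
            linarith
        have h2 : Tendsto (fun k : ℕ => ρ (Iic (c - 1/(k+1)))) atTop (𝓝 (ρ (Iio c))) := by
          rw [hiUnion]
          exact tendsto_measure_iUnion_atTop
            (fun k m hkm => Iic_subset_Iic.2 (by linarith [seq_le hkm]))
        have h1 : ∀ k : ℕ, ρ (Iic (c - 1/(k+1))) ≤ ENNReal.ofReal s := by
          intro k
          have hmem : c - 1/(k+1) ∈ A := by
            apply hIio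
            have : (0:ℝ) < 1/((k:ℝ)+1) := by positivity
            simp only [mem_Iio]
            linarith
          rw [hofF]
          exact ENNReal.ofReal_le_ofReal (le_of_lt hmem)
        have h3 : ρ (Iio c) ≤ ENNReal.ofReal s := le_of_tendsto h2 (Eventually.of_forall h1)
        have h4 : ρ (Iio c) = ρ (Iic c) := measure_congr (Iio_ae_eq_Iic)
        rw [h4, hofF] at h3
        exact (ENNReal.ofReal_le_ofReal_iff hs.le).1 h3
      have hFc : F c = s := le_antisymm hle hge
      have hmin : min s M = s := min_eq_left (hFc ▸ hFM c)
      rw [hmin]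
      calc ρ A = ρ (Iio c) := by rw [hAeq]
        _ = ρ (Iic c) := measure_congr (Iio_ae_eq_Iic)
        _ = ENNReal.ofReal (F c) := hofF c
        _ = ENNReal.ofReal s := by rw [hFc]
    · push_neg at hb
      have huniv : {u | F u < s} = univ := eq_univ_of_forall hb
      have hMs : M ≤ s := by
        have h2 : Tendsto (fun r : ℝ => ρ (Iic r)) atTop (𝓝 (ρ univ)) :=
          tendsto_measure_Iic_atTop ρ
        have h1 : ∀ r : ℝ, ρ (Iic r) ≤ ENNReal.ofReal s := by
          intro r
          rw [hofF]
          exact ENNReal.ofReal_le_ofReal (hb r).le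
        have h3 : ρ univ ≤ ENNReal.ofReal s := le_of_tendsto h2 (Eventually.of_forall h1)
        rw [hofM] at h3
        exact (ENNReal.ofReal_le_ofReal_iff hs.le).1 h3
      rw [huniv, min_eq_right hMs, hofM]

private lemma expKey (ρ : Measure ℝ) [IsFiniteMeasure ρ] [NullSingletonClass ρ]
    (h0 : ρ (Iic 0) = 0) (F : ℝ → ℝ) (hFeq : ∀ u, F u = (ρ (Iic u)).toReal)
    (M : ℝ) (hMeq : M = (ρ univ).toReal) :
    ∫⁻ u, ENNReal.ofReal (Real.exp (-F u)) ∂ρ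
      = ENNReal.ofReal (1 - Real.exp (-M)) := by
  have hFnn : ∀ u, 0 ≤ F u := fun u => (hFeq u).symm ▸ ENNReal.toReal_nonneg
  have hMnn : 0 ≤ M := hMeq ▸ ENNReal.toReal_nonneg
  have hFmono : Monotone F := by
    intro u v huv
    rw [hFeq u, hFeq v]
    exact ENNReal.toReal_mono (measure_ne_top _ _) (measure_mono (Iic_subset_Iic.2 huv))
  have hFmeas : Measurable F := hFmono.measurable
  have hofM : ρ univ = ENNReal.ofReal M := by
    rw [hMeq]; exact (ENNReal.ofReal_toReal (measure_ne_top _ _)).symm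
  -- antiderivative of exp (-t)
  have hanti : ∀ x : ℝ, ∫ t in (0:ℝ)..x, Real.exp (-t) = 1 - Real.exp (-x) := by
    intro x
    have hd : ∀ t ∈ uIcc (0:ℝ) x, HasDerivAt (fun y => -Real.exp (-y)) (Real.exp (-t)) t := by
      intro t _
      have h := ((Real.hasDerivAt_exp (-t)).comp t (hasDerivAt_neg t)).neg
      refine h.congr_deriv ?_
      ring
    rw [intervalIntegral.integral_eq_sub_of_hasDerivAt hd
      ((Real.continuous_exp.comp continuous_neg).intervalIntegrable 0 x)]
    rw [neg_zero, Real.exp_zero]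
    ring
  -- layer cake
  have lc := lintegral_comp_eq_lintegral_meas_le_mul (f := F) (g := fun t => Real.exp (-t)) ρ
    (ae_of_all _ hFnn) hFmeas.aemeasurable
    (fun t _ => (Real.continuous_exp.comp continuous_neg).intervalIntegrable 0 t)
    (ae_of_all _ fun t => (Real.exp_pos (-t)).le)
  simp_rw [hanti] at lc
  -- compute the tail measures
  have hms : ∀ t : ℝ, ρ {a | t ≤ F a} = ENNReal.ofReal M - ENNReal.ofReal (min t M) := by
    intro t
    have hset : {a | t ≤ F a} = {a | F a < t}ᶜ := by
      ext a; simp [not_lt]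
    have hFset : {a | F a < t} = {u | (ρ (Iic u)).toReal < t} := by
      ext a; simp [hFeq a]
    have hmeasset : MeasurableSet {a : ℝ | F a < t} := measurableSet_lt hFmeas measurable_const
    rw [hset, measure_compl hmeasset (measure_ne_top _ _), hFset, measLow ρ h0 t, ← hMeq, hofM]
  -- compute the RHS of layer cake
  have hval : ∫ t in (0:ℝ)..M, (M - t) * Real.exp (-t) = Real.exp (-M) - (1 - M) := by
    have hd : ∀ t ∈ uIcc (0:ℝ) M,
        HasDerivAt (fun y => (y - M + 1) * Real.exp (-y)) ((M - t) * Real.exp (-t)) t := by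
      intro t _
      have h1 : HasDerivAt (fun y : ℝ => y - M + 1) 1 t :=
        ((hasDerivAt_id t).sub_const M).add_const 1
      have h2 : HasDerivAt (fun y : ℝ => Real.exp (-y)) (Real.exp (-t) * (-1)) t :=
        (Real.hasDerivAt_exp (-t)).comp t (hasDerivAt_neg t)
      have h := h1.mul h2
      refine h.congr_deriv ?_
      ring
    rw [intervalIntegral.integral_eq_sub_of_hasDerivAt hd
      (((continuous_const.sub continuous_id).mul (Real.continuous_exp.comp continuous_neg)).intervalIntegrable 0 M)]
    rw [neg_zero, Real.exp_zero]
    ring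
  have hRHS : ∫⁻ t in Ioi (0:ℝ), ρ {a | t ≤ F a} * ENNReal.ofReal (Real.exp (-t))
      = ENNReal.ofReal (Real.exp (-M) - 1 + M) := by
    simp_rw [hms]
    rw [← Ioc_union_Ioi_eq_Ioi hMnn, lintegral_union measurableSet_Ioi (Ioc_disjoint_Ioi le_rfl)]
    have hpart2 : ∫⁻ t in Ioi M,
        (ENNReal.ofReal M - ENNReal.ofReal (min t M)) * ENNReal.ofReal (Real.exp (-t)) = 0 := by
      rw [setLIntegral_congr_fun measurableSet_Ioi
        (fun t (ht : t ∈ Ioi M) => by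
          rw [min_eq_right (le_of_lt ht), tsub_self, zero_mul])]
      simp
    have hpart1 : ∫⁻ t in Ioc 0 M,
        (ENNReal.ofReal M - ENNReal.ofReal (min t M)) * ENNReal.ofReal (Real.exp (-t))
        = ENNReal.ofReal (Real.exp (-M) - 1 + M) := by
      rw [setLIntegral_congr_fun measurableSet_Ioc
        (fun t (ht : t ∈ Ioc 0 M) => by
          rw [min_eq_left ht.2, ← ENNReal.ofReal_sub M ht.1.le,
            ← ENNReal.ofReal_mul (by linarith [ht.2] : (0:ℝ) ≤ M - t)])]
      have hint : IntegrableOn (fun t => (M - t) * Real.exp (-t)) (Ioc 0 M) volume :=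
        (((continuous_const.sub continuous_id).mul
          (Real.continuous_exp.comp continuous_neg))).integrableOn_Ioc
      have hnn : 0 ≤ᵐ[volume.restrict (Ioc 0 M)] fun t => (M - t) * Real.exp (-t) :=
        (ae_restrict_iff' measurableSet_Ioc).2 (ae_of_all _ fun t ht =>
          mul_nonneg (by linarith [ht.2]) (Real.exp_pos _).le)
      rw [← ofReal_integral_eq_lintegral_ofReal hint hnn,
        ← intervalIntegral.integral_of_le hMnn, hval]
      congr 1
      ring
    rw [hpart1, hpart2, add_zero]
  rw [hRHS] at lc
  -- now combine
  have hmeas1 : Measurable fun u => ENNReal.ofReal (1 - Real.exp (-F u)) :=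
    (measurable_const.sub ((Real.measurable_exp.comp hFmeas.neg))).ennreal_ofReal
  have hsum : (∫⁻ u, ENNReal.ofReal (1 - Real.exp (-F u)) ∂ρ)
      + ∫⁻ u, ENNReal.ofReal (Real.exp (-F u)) ∂ρ = ENNReal.ofReal M := by
    rw [← lintegral_add_left hmeas1]
    have hone : ∀ u, ENNReal.ofReal (1 - Real.exp (-F u)) + ENNReal.ofReal (Real.exp (-F u))
        = (1:ℝ≥0∞) := by
      intro u
      have hexple : Real.exp (-F u) ≤ 1 := Real.exp_le_one_iff.2 (neg_nonpos.2 (hFnn u))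
      rw [← ENNReal.ofReal_add (by linarith) (Real.exp_pos _).le]
      norm_num
    simp_rw [hone]
    rw [lintegral_one, hofM]
  rw [lc] at hsum
  have hkey : ∫⁻ u, ENNReal.ofReal (Real.exp (-F u)) ∂ρ
      = ENNReal.ofReal M - ENNReal.ofReal (Real.exp (-M) - 1 + M) := by
    rw [add_comm] at hsum
    exact ENNReal.eq_sub_of_add_eq ENNReal.ofReal_ne_top hsum
  have hXnn : (0:ℝ) ≤ Real.exp (-M) - 1 + M := by
    have := Real.add_one_le_exp (-M)
    linarith
  rw [hkey, ← ENNReal.ofReal_sub _ hXnn]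
  congr 1
  ring

/-- Zero-sum funding identity: with `κ` a continuous nondecreasing singular
price-impact term (constant on `(-∞,0]`), `S` a continuous positive stock
price, and `n(t) = n₀ exp(-∫_{(0,t]} S(u)⁻¹ dκ(u))` the number of outstanding
stocks, one has `n₀ - n(t) = ∫_{(0,t]} (n(u)/S(u)) dκ(u)` for all `t ≥ 0`. -/
theorem stmt8 (κ : StieltjesFunction ℝ) (hκc : Continuous κ)
    (hκ0 : ∀ u : ℝ, u ≤ 0 → κ u = κ 0)
    (S : ℝ → ℝ) (hSc : Continuous S) (hSpos : ∀ u : ℝ, 0 ≤ u → 0 < S u)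
    (n₀ : ℝ) (hn₀ : 0 < n₀)
    (n : ℝ → ℝ)
    (hn : ∀ t : ℝ, n t
      = n₀ * Real.exp (-(∫ u in Set.Ioc (0:ℝ) t, (S u)⁻¹ ∂κ.measure))) :
    ∀ t : ℝ, 0 ≤ t →
      n₀ - n t = ∫ u in Set.Ioc (0:ℝ) t, n u / S u ∂κ.measure := by
  intro t ht
  set μ := κ.measure with hμ
  -- μ has no atoms since κ is continuous
  have hNA : ∀ a : ℝ, μ {a} = 0 := by
    intro a
    rw [hμ, κ.measure_singleton]
    have : Function.leftLim (κ : ℝ → ℝ) a = κ a :=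
      leftLim_eq_of_tendsto
        ((hκc.tendsto a).mono_left nhdsWithin_le_nhds)
    rw [this, sub_self, ENNReal.ofReal_zero]
  set G : ℝ → ℝ := fun r => ∫ u in Ioc (0:ℝ) r, (S u)⁻¹ ∂μ with hG
  have hGnn : ∀ r, 0 ≤ G r := fun r =>
    setIntegral_nonneg measurableSet_Ioc (fun u hu => inv_nonneg.2 (hSpos u hu.1.le).le)
  -- integrability of S⁻¹ on Ioc 0 r for r ≤ t
  have hIntIcc : IntegrableOn (fun u => (S u)⁻¹) (Icc 0 t) μ :=
    (hSc.continuousOn.inv₀ (fun x hx => (hSpos x hx.1).ne')).integrableOn_compact isCompact_Icc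
  have hIntOn : ∀ r, r ≤ t → IntegrableOn (fun u => (S u)⁻¹) (Ioc 0 r) μ := by
    intro r hr
    exact hIntIcc.mono_set (fun x hx => ⟨hx.1.le, hx.2.trans hr⟩)
  have haeNN : ∀ r : ℝ, 0 ≤ᵐ[μ.restrict (Ioc 0 r)] fun u => (S u)⁻¹ :=
    fun r => (ae_restrict_iff' measurableSet_Ioc).2
      (ae_of_all _ fun u hu => inv_nonneg.2 (hSpos u hu.1.le).le)
  -- the with-density measure
  set ρ : Measure ℝ :=
    ((μ.restrict (Ioc 0 t)).withDensity (fun u => ENNReal.ofReal (S u)⁻¹)) with hρ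
  have hdmeas : Measurable fun u : ℝ => ENNReal.ofReal (S u)⁻¹ :=
    (hSc.measurable.inv).ennreal_ofReal
  have hIic : ∀ r, 0 ≤ r → r ≤ t → ρ (Iic r) = ENNReal.ofReal (G r) := by
    intro r h0r hrt
    rw [hρ, withDensity_apply _ measurableSet_Iic, Measure.restrict_restrict measurableSet_Iic]
    have hseteq : Iic r ∩ Ioc 0 t = Ioc 0 r := by
      ext x
      simp only [mem_inter_iff, mem_Iic, mem_Ioc]
      exact ⟨fun ⟨h1, h2, h3⟩ => ⟨h2, h1⟩, fun ⟨h1, h2⟩ => ⟨h2, h1, h2.trans hrt⟩⟩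
    rw [hseteq, ← ofReal_integral_eq_lintegral_ofReal (hIntOn r hrt) (haeNN r)]
  have hρuniv : ρ univ = ENNReal.ofReal (G t) := by
    rw [hρ, withDensity_apply _ MeasurableSet.univ, Measure.restrict_univ,
      ← ofReal_integral_eq_lintegral_ofReal (hIntOn t le_rfl) (haeNN t)]
  haveI : IsFiniteMeasure ρ := ⟨by rw [hρuniv]; exact ENNReal.ofReal_lt_top⟩
  haveI : NullSingletonClass ρ := by
    refine ⟨fun a => ?_⟩
    rw [hρ, withDensity_apply _ (measurableSet_singleton a)]
    apply setLIntegral_measure_zero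
    rw [Measure.restrict_apply (measurableSet_singleton a)]
    exact measure_mono_null inter_subset_left (hNA a)
  have hρ0 : ρ (Iic 0) = 0 := by
    rw [hρ, withDensity_apply _ measurableSet_Iic]
    apply setLIntegral_measure_zero
    rw [Measure.restrict_apply measurableSet_Iic]
    have : Iic (0:ℝ) ∩ Ioc 0 t = ∅ := by
      ext x
      simp only [mem_inter_iff, mem_Iic, mem_Ioc, mem_empty_iff_false, iff_false, not_and]
      intro h1 h2
      linarith
    rw [this, measure_empty]
  -- the key exponential identity
  have hkey := expKey ρ hρ0 (fun u => (ρ (Iic u)).toReal) (fun u => rfl) ((ρ univ).toReal) rfl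
  rw [hρuniv, ENNReal.toReal_ofReal (hGnn t)] at hkey
  -- transfer to an integral identity over μ
  set F : ℝ → ℝ := fun u => (ρ (Iic u)).toReal with hFdef
  have hFmono : Monotone F := fun u v huv =>
    ENNReal.toReal_mono (measure_ne_top _ _) (measure_mono (Iic_subset_Iic.2 huv))
  have hFmeas : Measurable F := hFmono.measurable
  have hexpmeas : Measurable fun u => ENNReal.ofReal (Real.exp (-F u)) :=
    (Real.measurable_exp.comp hFmeas.neg).ennreal_ofReal
  have hFG : ∀ u ∈ Ioc (0:ℝ) t, F u = G u := by
    intro u hu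
    rw [hFdef]
    simp only
    rw [hIic u hu.1.le hu.2, ENNReal.toReal_ofReal (hGnn u)]
  have hFGae : ∀ᵐ u ∂μ.restrict (Ioc 0 t),
      Real.exp (-(G u)) * (S u)⁻¹ = Real.exp (-F u) * (S u)⁻¹ :=
    (ae_restrict_iff' measurableSet_Ioc).2 (ae_of_all _ fun u hu => by rw [hFG u hu])
  -- integrability of the integrand
  have hmble : AEStronglyMeasurable (fun u => Real.exp (-(G u)) * (S u)⁻¹)
      (μ.restrict (Ioc 0 t)) := by
    have : AEStronglyMeasurable (fun u => Real.exp (-F u) * (S u)⁻¹)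
        (μ.restrict (Ioc 0 t)) :=
      ((Real.measurable_exp.comp hFmeas.neg).mul hSc.measurable.inv).aestronglyMeasurable
    exact this.congr (Filter.EventuallyEq.symm hFGae)
  have hI : Integrable (fun u => Real.exp (-(G u)) * (S u)⁻¹) (μ.restrict (Ioc 0 t)) := by
    refine Integrable.mono (hIntOn t le_rfl) hmble (ae_of_all _ fun u => ?_)
    rw [norm_mul]
    have h1 : ‖Real.exp (-(G u))‖ ≤ 1 := by
      rw [Real.norm_eq_abs, abs_of_pos (Real.exp_pos _)]
      exact Real.exp_le_one_iff.2 (neg_nonpos.2 (hGnn u))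
    calc ‖Real.exp (-(G u))‖ * ‖(S u)⁻¹‖ ≤ 1 * ‖(S u)⁻¹‖ :=
          mul_le_mul_of_nonneg_right h1 (norm_nonneg _)
      _ = ‖(S u)⁻¹‖ := one_mul _
  have hInn : 0 ≤ᵐ[μ.restrict (Ioc 0 t)] fun u => Real.exp (-(G u)) * (S u)⁻¹ :=
    (ae_restrict_iff' measurableSet_Ioc).2 (ae_of_all _ fun u hu =>
      mul_nonneg (Real.exp_pos _).le (inv_nonneg.2 (hSpos u hu.1.le).le))
  -- the central computation
  have hcentral : ∫ u in Ioc (0:ℝ) t, Real.exp (-(G u)) * (S u)⁻¹ ∂μ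
      = 1 - Real.exp (-(G t)) := by
    have h1 : ENNReal.ofReal (∫ u in Ioc (0:ℝ) t, Real.exp (-(G u)) * (S u)⁻¹ ∂μ)
        = ∫⁻ u in Ioc (0:ℝ) t, ENNReal.ofReal (Real.exp (-(G u)) * (S u)⁻¹) ∂μ :=
      ofReal_integral_eq_lintegral_ofReal hI hInn
    have h2 : ∫⁻ u in Ioc (0:ℝ) t, ENNReal.ofReal (Real.exp (-(G u)) * (S u)⁻¹) ∂μ
        = ∫⁻ u in Ioc (0:ℝ) t, ENNReal.ofReal (S u)⁻¹ * ENNReal.ofReal (Real.exp (-F u)) ∂μ := by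
      apply lintegral_congr_ae
      filter_upwards [hFGae] with u hu
      rw [hu, ENNReal.ofReal_mul (Real.exp_pos _).le, mul_comm]
    have h3 : ∫⁻ u in Ioc (0:ℝ) t, ENNReal.ofReal (S u)⁻¹ * ENNReal.ofReal (Real.exp (-F u)) ∂μ
        = ∫⁻ u, ENNReal.ofReal (Real.exp (-F u)) ∂ρ := by
      rw [hρ, lintegral_withDensity_eq_lintegral_mul _ hdmeas hexpmeas]
      rfl
    have h4 : ∫⁻ u, ENNReal.ofReal (Real.exp (-F u)) ∂ρ
        = ENNReal.ofReal (1 - Real.exp (-(G t))) := hkey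
    have := h1.trans (h2.trans (h3.trans h4))
    have hinn : 0 ≤ ∫ u in Ioc (0:ℝ) t, Real.exp (-(G u)) * (S u)⁻¹ ∂μ :=
      integral_nonneg_of_ae hInn
    have h1nn : (0:ℝ) ≤ 1 - Real.exp (-(G t)) := by
      have : Real.exp (-(G t)) ≤ 1 := Real.exp_le_one_iff.2 (neg_nonpos.2 (hGnn t))
      linarith
    exact (ENNReal.ofReal_eq_ofReal_iff hinn h1nn).1 this
  -- conclude
  have hRHS : ∫ u in Ioc (0:ℝ) t, n u / S u ∂μ
      = n₀ * ∫ u in Ioc (0:ℝ) t, Real.exp (-(G u)) * (S u)⁻¹ ∂μ := by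
    rw [← integral_const_mul]
    apply setIntegral_congr_fun measurableSet_Ioc
    intro u _
    show n u / S u = n₀ * (Real.exp (-(G u)) * (S u)⁻¹)
    rw [hn u, div_eq_mul_inv, mul_assoc]
  rw [hRHS, hcentral, hn t]
  show n₀ - n₀ * Real.exp (-(G t)) = n₀ * (1 - Real.exp (-(G t)))
  ring
end

section
/- Let Y : [0,∞) → ℝ be continuous with Y(u) > 0 for all u ≥ 0 and Y(u) → ∞ as u → ∞, and define the future infimum J(t) := inf_{u ≥ t} Y(u). Then J is a continuous nondecreasing positive function, and for every t ≥ 0, ∫_{(0,t]} Y(u)^{−1} d(μ_J)(u) = log(J(t)) − log(J(0)), where μ_J is the Lebesgue–Stieltjes measure of J. Consequently, with κ(t) := 2(J(t) − J(0)) and n₀ > 0, the funding strategy n(t) := n₀·exp( −∫_{(0,t]} Y(u)^{−1} d(μ_κ)(u) ) equals n₀·( J(0)/J(t) )². -/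
open Set MeasureTheory Filter

section aux
variable {Y J : ℝ → ℝ}

lemma aux_bdd (hYpos : ∀ u : ℝ, 0 ≤ u → 0 < Y u) {t : ℝ} (ht : 0 ≤ t) :
    BddBelow (Y '' Set.Ici t) :=
  ⟨0, by rintro y ⟨u, hu, rfl⟩; exact (hYpos u (ht.trans hu)).le⟩

lemma aux_attain (hYc : ContinuousOn Y (Set.Ici 0))
    (hYinf : Filter.Tendsto Y Filter.atTop Filter.atTop) {t : ℝ} (ht : 0 ≤ t) :
    ∃ w, t ≤ w ∧ ∀ u, t ≤ u → Y w ≤ Y u := by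
  obtain ⟨T, hT⟩ := (Filter.tendsto_atTop.1 hYinf (Y t + 1)).exists_forall_of_atTop
  obtain ⟨w, hwK, hwmin⟩ := (isCompact_Icc (a := t) (b := max T t)).exists_isMinOn
    ⟨t, le_rfl, le_max_right _ _⟩
    (hYc.mono (fun u hu => ht.trans hu.1))
  refine ⟨w, hwK.1, fun u hu => ?_⟩
  rcases le_total u (max T t) with h | h
  · exact hwmin ⟨hu, h⟩
  · have h1 : Y t + 1 ≤ Y u := hT u ((le_max_left _ _).trans h)
    have h2 : Y w ≤ Y t := hwmin ⟨le_rfl, le_max_right _ _⟩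
    linarith

variable (hYc : ContinuousOn Y (Set.Ici 0)) (hYpos : ∀ u : ℝ, 0 ≤ u → 0 < Y u)
  (hYinf : Filter.Tendsto Y Filter.atTop Filter.atTop)
  (hJ : ∀ t : ℝ, J t = sInf (Y '' Set.Ici (max t 0)))

include hYpos hJ in
lemma J_le {t u : ℝ} (htu : t ≤ u) (hu : 0 ≤ u) : J t ≤ Y u := by
  rw [hJ t]
  exact csInf_le (aux_bdd hYpos (le_max_right t 0)) ⟨u, max_le htu hu, rfl⟩

include hYc hYpos hYinf hJ in
lemma J_attain (t : ℝ) :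
    ∃ w, max t 0 ≤ w ∧ Y w = J t ∧ ∀ u, max t 0 ≤ u → Y w ≤ Y u := by
  obtain ⟨w, hw, hwmin⟩ := aux_attain hYc hYinf (le_max_right t 0)
  refine ⟨w, hw, ?_, hwmin⟩
  rw [hJ t]
  refine le_antisymm ?_ (csInf_le (aux_bdd hYpos (le_max_right t 0)) ⟨w, hw, rfl⟩)
  refine le_csInf ⟨Y (max t 0), ⟨max t 0, mem_Ici.2 le_rfl, rfl⟩⟩ ?_
  rintro y ⟨u, hu, rfl⟩
  exact hwmin u hu

include hYpos hJ in
lemma J_mono : Monotone J := by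
  intro s t hst
  rw [hJ s, hJ t]
  refine csInf_le_csInf (aux_bdd hYpos (le_max_right s 0)) ⟨Y (max t 0), max t 0, mem_Ici.2 le_rfl, rfl⟩
    (image_mono (Ici_subset_Ici.2 (max_le_max hst le_rfl)))

include hYc hYpos hYinf hJ in
lemma J_pos (t : ℝ) : 0 < J t := by
  obtain ⟨w, hw, hwe, -⟩ := J_attain hYc hYpos hYinf hJ t
  rw [← hwe]
  exact hYpos w ((le_max_right t 0).trans hw)

include hYc hYpos hYinf hJ in
omit hYc hYpos hYinf in
lemma J_const_neg {t : ℝ} (ht : t ≤ 0) : J t = J 0 := by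
  rw [hJ t, hJ 0, max_eq_right ht, max_self]

include hYc hYpos hYinf hJ in
lemma J_cont : Continuous J := by
  have hmono := J_mono hYpos hJ
  have est_left : ∀ t : ℝ, ∀ ε > (0:ℝ), ∃ s < t, J t - ε < J s := by
    intro t ε hε
    rcases le_or_gt t 0 with ht | ht
    · refine ⟨t - 1, by linarith, ?_⟩
      have : J (t-1) = J t := by
        rw [J_const_neg hJ (by linarith), J_const_neg hJ ht]
      rw [this]; linarith
    · have hYt : ContinuousAt Y t := hYc.continuousAt (Ici_mem_nhds ht)
      have h1 : ∀ᶠ v in nhds t, Y v ∈ Ioi (J t - ε) := by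
        refine hYt (Ioi_mem_nhds ?_)
        have := J_le hYpos hJ (le_refl t) ht.le
        linarith
      obtain ⟨δ, hδ, hball⟩ := Metric.eventually_nhds_iff.1 h1
      set δ' := min (δ/2) (t/2) with hδ'def
      have hδ'pos : 0 < δ' := lt_min (by linarith) (by linarith)
      refine ⟨t - δ', by linarith, ?_⟩
      have hs0 : (0:ℝ) ≤ t - δ' := by
        have : δ' ≤ t/2 := min_le_right _ _
        linarith
      obtain ⟨w, hw, hwe, -⟩ := J_attain hYc hYpos hYinf hJ (t - δ')
      rw [max_eq_left hs0] at hw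
      rw [← hwe]
      rcases le_or_gt t w with hwt | hwt
      · have := J_le hYpos hJ hwt (hs0.trans hw)
        linarith
      · have hdist : dist w t < δ := by
          rw [Real.dist_eq, abs_lt]
          have : δ' ≤ δ/2 := min_le_left _ _
          constructor <;> [linarith; linarith]
        exact hball hdist
  have est_right : ∀ t : ℝ, ∀ ε > (0:ℝ), ∃ s > t, J s < J t + ε := by
    intro t ε hε
    rcases lt_or_ge t 0 with ht | ht
    · refine ⟨t/2, by linarith, ?_⟩
      rw [J_const_neg hJ (by linarith), J_const_neg hJ ht.le]
      linarith
    · obtain ⟨w, hw, hwe, -⟩ := J_attain hYc hYpos hYinf hJ t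
      rw [max_eq_left ht] at hw
      rcases lt_or_eq_of_le hw with hw | hw
      · refine ⟨w, hw, ?_⟩
        have h1 : J w ≤ Y w := J_le hYpos hJ le_rfl (ht.trans hw.le)
        rw [hwe] at h1; linarith
      · -- w = t, so Y t = J t
        have hYt : Y t = J t := by rw [hw, hwe, hw]
        have hcw : ContinuousWithinAt Y (Set.Ici 0) t := hYc.continuousWithinAt ht
        have h1 : ∀ᶠ v in nhdsWithin t (Set.Ioi t), Y v ∈ Iio (J t + ε) := by
          refine Filter.Eventually.filter_mono (nhdsWithin_mono t (fun v hv => le_of_lt (ht.trans_lt hv))) ?_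
          exact hcw (Iio_mem_nhds (by rw [hYt]; linarith))
        obtain ⟨s, hs1, hs2⟩ := (h1.and (eventually_mem_nhdsWithin)).exists
        exact ⟨s, hs2, lt_of_le_of_lt (J_le hYpos hJ le_rfl (ht.trans hs2.le)) hs1⟩
  refine continuous_iff_continuousAt.2 fun t => tendsto_order.2 ⟨fun a ha => ?_, fun b hb => ?_⟩
  · obtain ⟨s, hst, hs⟩ := est_left t (J t - a) (by linarith)
    have : a < J s := by linarith
    filter_upwards [Ioi_mem_nhds hst] with v hv
    exact this.trans_le (hmono (le_of_lt hv))
  · obtain ⟨s, hst, hs⟩ := est_right t (b - J t) (by linarith)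
    filter_upwards [Iio_mem_nhds hst] with v hv
    exact lt_of_le_of_lt (hmono (le_of_lt hv)) (by linarith)

end aux

section measure_part
variable {Y J : ℝ → ℝ}

lemma enn_arith {J0 Jt c d : ℝ} (h0t : J0 ≤ Jt) (hcd : c < d) :
    ENNReal.ofReal (min d Jt - J0) - ENNReal.ofReal (min c Jt - J0)
      = ENNReal.ofReal (min d Jt - max c J0) := by
  rcases le_total c J0 with h | h
  · have hz : ENNReal.ofReal (min c Jt - J0) = 0 :=
      ENNReal.ofReal_eq_zero.2 (by simp only [sub_nonpos]; exact (min_le_left _ _).trans h)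
    rw [hz, tsub_zero, max_eq_right h]
  · rcases le_total c Jt with hc | hc
    · rw [← ENNReal.ofReal_sub _ (by simp only [sub_nonneg]; exact le_min h h0t),
        max_eq_left h, min_eq_left hc]
      congr 1; ring
    · have hd : Jt ≤ d := hc.trans hcd.le
      rw [min_eq_right hc, min_eq_right hd, tsub_self]
      symm
      rw [ENNReal.ofReal_eq_zero]
      have : Jt ≤ max c J0 := hc.trans (le_max_left _ _)
      linarith

lemma B_meas (hcont : Continuous J) (hmono : Monotone J) (F : StieltjesFunction ℝ)
    (hFJ : ∀ s : ℝ, F s = J s) {t : ℝ} (ht : 0 ≤ t) (x : ℝ) :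
    F.measure (Ioc 0 t ∩ {u | J u ≤ x}) = ENNReal.ofReal (min x (J t) - J 0) := by
  rcases lt_or_ge x (J 0) with hx | hx
  · have hempty : Ioc 0 t ∩ {u | J u ≤ x} = ∅ := by
      refine eq_empty_iff_forall_notMem.2 fun u ⟨hu1, hu2⟩ => ?_
      have : J 0 ≤ J u := hmono hu1.1.le
      exact absurd hu2 (not_le.2 (hx.trans_le this))
    rw [hempty, measure_empty]
    symm
    rw [ENNReal.ofReal_eq_zero]
    have : min x (J t) ≤ x := min_le_left _ _
    linarith
  · set E : Set ℝ := Icc 0 t ∩ {u | J u ≤ x} with hEdef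
    have hEclosed : IsClosed E := isClosed_Icc.inter (isClosed_le hcont continuous_const)
    have hEne : E.Nonempty := ⟨0, ⟨le_rfl, ht⟩, hx⟩
    have hEbdd : BddAbove E := ⟨t, fun u hu => hu.1.2⟩
    have hβmem : sSup E ∈ E := hEclosed.csSup_mem hEne hEbdd
    set β := sSup E with hβdef
    obtain ⟨⟨hβ0, hβt⟩, hβx⟩ := hβmem
    have hset : Ioc 0 t ∩ {u | J u ≤ x} = Ioc 0 β := by
      ext u
      constructor
      · rintro ⟨⟨hu0, hut⟩, hux⟩
        exact ⟨hu0, le_csSup hEbdd ⟨⟨hu0.le, hut⟩, hux⟩⟩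
      · rintro ⟨hu0, huβ⟩
        exact ⟨⟨hu0, huβ.trans hβt⟩, (hmono huβ).trans hβx⟩
    rw [hset, F.measure_Ioc, hFJ, hFJ]
    have hJβ : J β = min x (J t) := by
      rcases le_total (J t) x with h | h
      · have hβeq : β = t := le_antisymm hβt (le_csSup hEbdd ⟨⟨ht, le_rfl⟩, h⟩)
        rw [hβeq, min_eq_right h]
      · rw [min_eq_left h]
        refine le_antisymm hβx (not_lt.1 fun hlt => ?_)
        have hβt' : β < t := by
          rcases lt_or_eq_of_le hβt with h' | h'
          · exact h'
          · exfalso; rw [h'] at hlt; exact absurd hlt (not_lt.2 h)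
        have evt : ∀ᶠ v in nhds β, J v < x := hcont.continuousAt (Iio_mem_nhds hlt)
        have hmem : Ioc β t ∈ nhdsWithin β (Set.Ioi β) :=
          Ioc_mem_nhdsGT_of_mem ⟨le_rfl, hβt'⟩
        obtain ⟨v, hv1, hv2⟩ :=
          ((evt.filter_mono nhdsWithin_le_nhds).and (eventually_of_mem hmem fun v hv => hv)).exists
        have : v ∈ E := ⟨⟨hβ0.trans hv2.1.le, hv2.2⟩, hv1.le⟩
        exact absurd (le_csSup hEbdd this) (not_le.2 hv2.1)
    rw [hJβ]

lemma map_eq (hcont : Continuous J) (hmono : Monotone J) (F : StieltjesFunction ℝ)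
    (hFJ : ∀ s : ℝ, F s = J s) {t : ℝ} (ht : 0 ≤ t) :
    Measure.map J (F.measure.restrict (Ioc 0 t)) = volume.restrict (Ioc (J 0) (J t)) := by
  have hJm : Measurable J := hcont.measurable
  have hfin : ∀ c d : ℝ, Measure.map J (F.measure.restrict (Ioc 0 t)) (Ioc c d) ≠ ⊤ := by
    intro c d
    rw [Measure.map_apply hJm measurableSet_Ioc, Measure.restrict_apply (hJm measurableSet_Ioc)]
    refine ne_of_lt (lt_of_le_of_lt (measure_mono inter_subset_right) ?_)
    rw [F.measure_Ioc]
    exact ENNReal.ofReal_lt_top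
  refine Measure.ext_of_Ioc' _ _ (fun c d _ => hfin c d) fun c d hcd => ?_
  rw [Measure.map_apply hJm measurableSet_Ioc, Measure.restrict_apply (hJm measurableSet_Ioc),
    Measure.restrict_apply measurableSet_Ioc, Set.Ioc_inter_Ioc, Real.volume_Ioc]
  have hsplit : J ⁻¹' Ioc c d ∩ Ioc 0 t
      = (Ioc 0 t ∩ {u | J u ≤ d}) \ (Ioc 0 t ∩ {u | J u ≤ c}) := by
    ext u
    simp only [mem_inter_iff, mem_preimage, mem_Ioc, mem_diff, mem_setOf_eq]
    constructor
    · rintro ⟨⟨hc, hd⟩, hu⟩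
      exact ⟨⟨hu, hd⟩, fun h => absurd h.2 (not_le.2 hc)⟩
    · rintro ⟨⟨hu, hd⟩, h⟩
      refine ⟨⟨not_le.1 fun hc => h ⟨hu, hc⟩, hd⟩, hu⟩
  have hsub : (Ioc 0 t ∩ {u | J u ≤ c}) ⊆ (Ioc 0 t ∩ {u | J u ≤ d}) := by
    rintro u ⟨hu1, hu2⟩
    exact ⟨hu1, le_trans hu2 hcd.le⟩
  have hcm : MeasurableSet (Ioc (0:ℝ) t ∩ {u | J u ≤ c}) :=
    measurableSet_Ioc.inter (hJm measurableSet_Iic)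
  have hcfin : F.measure (Ioc 0 t ∩ {u | J u ≤ c}) ≠ ⊤ := by
    refine ne_of_lt (lt_of_le_of_lt (measure_mono inter_subset_left) ?_)
    rw [F.measure_Ioc]; exact ENNReal.ofReal_lt_top
  rw [hsplit, measure_diff hsub hcm.nullMeasurableSet hcfin,
    B_meas hcont hmono F hFJ ht d, B_meas hcont hmono F hFJ ht c,
    enn_arith (hmono ht) hcd]

end measure_part

section nulls
variable {Y J : ℝ → ℝ}
variable (hYc : ContinuousOn Y (Set.Ici 0)) (hYpos : ∀ u : ℝ, 0 ≤ u → 0 < Y u)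
  (hYinf : Filter.Tendsto Y Filter.atTop Filter.atTop)
  (hJ : ∀ t : ℝ, J t = sInf (Y '' Set.Ici (max t 0)))

include hYc hYpos hYinf hJ in
lemma null_N (F : StieltjesFunction ℝ) (hFJ : ∀ s : ℝ, F s = J s) :
    F.measure {u | 0 < u ∧ Y u ≠ J u} = 0 := by
  have hmono := J_mono hYpos hJ
  set N : Set ℝ := {u | 0 < u ∧ Y u ≠ J u} with hN
  have key : ∀ u : N, ∃ s : Set ℝ, IsOpen s ∧ (u : ℝ) ∈ s ∧ F.measure s = 0 := by
    rintro ⟨u, hu0, hune⟩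
    have hle : J u ≤ Y u := J_le hYpos hJ le_rfl hu0.le
    have hlt : J u < Y u := lt_of_le_of_ne hle (Ne.symm hune)
    have hYu : ContinuousAt Y u := hYc.continuousAt (Ici_mem_nhds hu0)
    have h1 : ∀ᶠ v in nhds u, Y v ∈ Ioi (J u) := hYu (Ioi_mem_nhds hlt)
    obtain ⟨δ0, hδ0, hball⟩ := Metric.eventually_nhds_iff.1 h1
    set δ := min (δ0/2) (u/2) with hδdef
    have hδpos : 0 < δ := lt_min (by linarith) (by linarith)
    have hδδ0 : δ < δ0 := lt_of_le_of_lt (min_le_left _ _) (by linarith)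
    have ha0 : (0:ℝ) ≤ u - δ := by
      have : δ ≤ u/2 := min_le_right _ _
      linarith
    refine ⟨Ioo (u - δ) (u + δ), isOpen_Ioo, ⟨by linarith, by linarith⟩, ?_⟩
    obtain ⟨w, hw, hwe, -⟩ := J_attain hYc hYpos hYinf hJ (u - δ)
    rw [max_eq_left ha0] at hw
    have hwb : u + δ ≤ w := by
      by_contra hwb
      push_neg at hwb
      have hdist : dist w u < δ0 := by
        rw [Real.dist_eq, abs_lt]
        constructor <;> [linarith; linarith]
      have h2 : J u < Y w := hball hdist
      have h3 : J (u - δ) ≤ J u := hmono (by linarith)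
      rw [hwe] at h2
      linarith
    have hJb : J (u + δ) ≤ J (u - δ) := by
      rw [← hwe]
      exact J_le hYpos hJ hwb (by linarith)
    refine le_antisymm ?_ (zero_le)
    calc F.measure (Ioo (u - δ) (u + δ)) ≤ F.measure (Ioc (u - δ) (u + δ)) :=
          measure_mono Ioo_subset_Ioc_self
      _ = 0 := by
          rw [F.measure_Ioc, hFJ, hFJ, ENNReal.ofReal_eq_zero]
          linarith
  choose s hsopen hsmem hsnull using key
  obtain ⟨T, hTc, hTeq⟩ := TopologicalSpace.isOpen_iUnion_countable s hsopen
  have hNsub : N ⊆ ⋃ i ∈ T, s i := by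
    intro u hu
    rw [hTeq]
    exact mem_iUnion.2 ⟨⟨u, hu⟩, hsmem _⟩
  refine le_antisymm (le_trans (measure_mono hNsub) ?_) (zero_le)
  rw [(measure_biUnion_null_iff hTc).2 fun i _ => hsnull i]

end nulls

/-- For `Y` continuous and positive on `[0,∞)` with `Y(u) → ∞`, the future
infimum `J(t) = inf_{u ≥ t} Y(u)` (extended constantly to `t < 0`) is a
continuous nondecreasing positive function, the Lebesgue–Stieltjes integral
satisfies `∫_{(0,t]} Y(u)⁻¹ dJ(u) = log J(t) - log J(0)`, and consequently the
funding strategy `n(t) = n₀ exp(-∫_{(0,t]} Y(u)⁻¹ dκ(u))` with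
`κ = 2(J - J(0))` equals `n₀ (J(0)/J(t))²`. -/
theorem stmt9 (Y : ℝ → ℝ) (hYc : ContinuousOn Y (Set.Ici 0))
    (hYpos : ∀ u : ℝ, 0 ≤ u → 0 < Y u)
    (hYinf : Filter.Tendsto Y Filter.atTop Filter.atTop)
    (J : ℝ → ℝ) (hJ : ∀ t : ℝ, J t = sInf (Y '' Set.Ici (max t 0))) :
    Continuous J ∧ Monotone J ∧ (∀ t : ℝ, 0 < J t) ∧
    ∃ F : StieltjesFunction ℝ, (∀ t : ℝ, F t = J t) ∧
      (∀ t : ℝ, 0 ≤ t →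
        (∫ u in Set.Ioc (0:ℝ) t, (Y u)⁻¹ ∂F.measure)
          = Real.log (J t) - Real.log (J 0)) ∧
      (∀ n₀ : ℝ, 0 < n₀ → ∀ t : ℝ, 0 ≤ t →
        n₀ * Real.exp
            (-(∫ u in Set.Ioc (0:ℝ) t, (Y u)⁻¹ ∂((2 : ENNReal) • F.measure)))
          = n₀ * (J 0 / J t) ^ 2) := by
  have hmono := J_mono hYpos hJ
  have hcont := J_cont hYc hYpos hYinf hJ
  have hpos := J_pos hYc hYpos hYinf hJ
  refine ⟨hcont, hmono, hpos, ?_⟩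
  set F : StieltjesFunction ℝ :=
    ⟨J, hmono, fun x => (hcont.continuousAt).continuousWithinAt⟩ with hFdef
  have hFJ : ∀ s : ℝ, F s = J s := fun s => rfl
  have hJm : Measurable J := hcont.measurable
  have key : ∀ t : ℝ, 0 ≤ t →
      (∫ u in Set.Ioc (0:ℝ) t, (Y u)⁻¹ ∂F.measure)
        = Real.log (J t) - Real.log (J 0) := by
    intro t ht
    have h00 : 0 < J 0 := hpos 0
    have h0tp : 0 < J t := hpos t
    have hcongr : (∫ u in Set.Ioc (0:ℝ) t, (Y u)⁻¹ ∂F.measure)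
        = ∫ u in Set.Ioc (0:ℝ) t, (J u)⁻¹ ∂F.measure := by
      refine setIntegral_congr_ae measurableSet_Ioc ?_
      have h0 : F.measure {u | 0 < u ∧ Y u ≠ J u} = 0 := null_N hYc hYpos hYinf hJ F hFJ
      rw [ae_iff]
      refine measure_mono_null (fun u hu => ?_) h0
      rw [Set.mem_setOf_eq, _root_.not_imp] at hu
      exact ⟨hu.1.1, fun h => hu.2 (by rw [h])⟩
    rw [hcongr]
    have hmap := map_eq hcont hmono F hFJ ht
    have hint : (∫ u in Set.Ioc (0:ℝ) t, (J u)⁻¹ ∂F.measure)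
        = ∫ x, x⁻¹ ∂(Measure.map J (F.measure.restrict (Set.Ioc 0 t))) :=
      (integral_map hJm.aemeasurable measurable_inv.aestronglyMeasurable).symm
    rw [hint, hmap]
    have h0t : J 0 ≤ J t := hmono ht
    have : (∫ x in Set.Ioc (J 0) (J t), x⁻¹) = ∫ x in (J 0)..(J t), x⁻¹ :=
      (intervalIntegral.integral_of_le h0t).symm
    rw [this, integral_inv (Set.notMem_uIcc_of_lt h00 h0tp),
      Real.log_div h0tp.ne' h00.ne']
  refine ⟨F, hFJ, key, fun n₀ hn₀ t ht => ?_⟩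
  have h00 : 0 < J 0 := hpos 0
  have h0tp : 0 < J t := hpos t
  have h2 : (∫ u in Set.Ioc (0:ℝ) t, (Y u)⁻¹ ∂((2 : ENNReal) • F.measure))
      = 2 * (Real.log (J t) - Real.log (J 0)) := by
    rw [Measure.restrict_smul, integral_smul_measure, key t ht]
    norm_num
  rw [h2]
  congr 1
  have harg : -(2 * (Real.log (J t) - Real.log (J 0)))
      = Real.log ((J 0 / J t) ^ 2) := by
    rw [div_pow, Real.log_div (pow_pos h00 2).ne' (pow_pos h0tp 2).ne',
      Real.log_pow, Real.log_pow]
    push_cast; ring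
  rw [harg, Real.exp_log (pow_pos (div_pos h00 h0tp) 2)]
end

section
/- Let L : ℝ → ℝ be a continuous nondecreasing function with L(u) = 0 for u ≤ 0, and let b > 0, c > 0, q ≥ 0. Set α := 1 + c and p := (1+q)·(1 + 1/c). Then for every t ≥ 0, exp( −(1+q)·∫_{(0,t]} α·(b + c·L(u))^{−1} d(μ_L)(u) ) = ( 1 + (c/b)·L(t) )^{−p}. -/
open Set MeasureTheory

lemma aux_ofReal (Lt a b : ℝ) :
    ENNReal.ofReal (max (min b Lt) 0 - max (min a Lt) 0)
      = ENNReal.ofReal (min b Lt - max a 0) := by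
  rcases le_or_gt (min b Lt) (max a 0) with h | h
  · have h2 : max (min b Lt) 0 ≤ max (min a Lt) 0 := by
      refine max_le ?_ (le_max_right _ _)
      rcases le_total a 0 with ha | ha
      · have : min b Lt ≤ 0 := h.trans_eq (max_eq_right ha)
        exact this.trans (le_max_right _ _)
      · have h1 : min b Lt ≤ a := h.trans_eq (max_eq_left ha)
        exact le_max_of_le_left (le_min h1 (min_le_right _ _))
    rw [ENNReal.ofReal_eq_zero.mpr (by linarith),
      ENNReal.ofReal_eq_zero.mpr (by linarith)]
  · have hb0 : (0 : ℝ) < min b Lt := lt_of_le_of_lt (le_max_right a 0) h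
    have haLt : a < Lt := lt_of_le_of_lt (le_max_left a 0)
      (h.trans_le (min_le_right b Lt))
    rw [max_eq_left hb0.le, min_eq_left haLt.le]

/-- For `L` continuous nondecreasing with `L 0 = 0` and `0 ≤ t`, there is a "hitting time"
`y ∈ [0,t]` such that `L u ≤ v ↔ u ≤ y` on `(0,t]`, and `L y = max (min v (L t)) 0`. -/
lemma exists_hitting (L : StieltjesFunction ℝ) (hLc : Continuous L) (h0 : L 0 = 0)
    {t : ℝ} (ht : 0 ≤ t) (v : ℝ) :
    ∃ y : ℝ, y ∈ Icc 0 t ∧ (∀ u ∈ Ioc (0:ℝ) t, (L u ≤ v ↔ u ≤ y)) ∧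
      L y = max (min v (L t)) 0 := by
  set A : Set ℝ := insert 0 {u ∈ Icc 0 t | L u ≤ v} with hA
  have hA_ne : A.Nonempty := ⟨0, mem_insert _ _⟩
  have hA_sub : A ⊆ Icc 0 t := by
    rintro x (rfl | ⟨hx, _⟩)
    · exact ⟨le_rfl, ht⟩
    · exact hx
  have hsep : {u ∈ Icc 0 t | L u ≤ v} = Icc 0 t ∩ {u | L u ≤ v} := rfl
  have hA_closed : IsClosed A := by
    rw [hA, insert_eq, hsep]
    exact isClosed_singleton.union
      (isClosed_Icc.inter (isClosed_le hLc continuous_const))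
  have hA_cpt : IsCompact A := (isCompact_Icc (a := (0:ℝ)) (b := t)).of_isClosed_subset
    hA_closed hA_sub
  set y := sSup A with hy
  have hyA : y ∈ A := hA_cpt.sSup_mem hA_ne
  have hy0 : 0 ≤ y := le_csSup hA_cpt.bddAbove (mem_insert _ _)
  have hyt : y ≤ t := (hA_sub hyA).2
  have hiff : ∀ u ∈ Ioc (0:ℝ) t, (L u ≤ v ↔ u ≤ y) := by
    intro u hu
    constructor
    · intro h
      exact le_csSup hA_cpt.bddAbove (Or.inr ⟨⟨hu.1.le, hu.2⟩, h⟩)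
    · intro h
      rcases hyA with hy0' | ⟨_, hLy⟩
      · exact absurd (h.trans_eq hy0') (not_le.mpr hu.1)
      · exact (L.mono h).trans hLy
  have hLy_le : L y ≤ max v 0 := by
    rcases hyA with hy0' | ⟨_, hLy⟩
    · rw [hy0', h0]; exact le_max_right _ _
    · exact hLy.trans (le_max_left _ _)
  refine ⟨y, ⟨hy0, hyt⟩, hiff, ?_⟩
  rcases lt_or_ge v 0 with hv | hv
  · have hyz : y = 0 := by
      refine le_antisymm ?_ hy0
      rcases hyA with hy0' | ⟨hy', hLy⟩
      · exact hy0'.le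
      · have : (0:ℝ) ≤ L y := h0 ▸ L.mono hy'.1
        linarith
    rw [hyz, h0, max_eq_right]
    exact (min_le_left v (L t)).trans hv.le
  · rcases le_or_gt (L t) v with hvt | hvt
    · have hyz : y = t := le_antisymm hyt
        (le_csSup hA_cpt.bddAbove (Or.inr ⟨⟨ht, le_rfl⟩, hvt⟩))
      rw [hyz, min_eq_right hvt, max_eq_left (h0 ▸ L.mono ht)]
    · -- 0 ≤ v < L t
      have hLy_le' : L y ≤ v := by
        rcases hyA with hy0' | ⟨_, hLy⟩
        · rw [hy0', h0]; exact hv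
        · exact hLy
      have hyt' : y < t := by
        rcases lt_or_eq_of_le hyt with h | h
        · exact h
        · rw [h] at hLy_le'
          exact absurd hLy_le' (not_le.mpr hvt)
      have hLy_ge : v ≤ L y := by
        by_contra hlt
        push_neg at hlt
        have h2 : ∀ᶠ u in nhds y, L u < v :=
          (hLc.tendsto y).eventually_lt_const hlt
        have h3 : ∀ᶠ u in nhds y, u < t := eventually_lt_nhds hyt'
        have h4 : ∀ᶠ u in nhdsWithin y (Ioi y), (L u < v ∧ u < t) ∧ u ∈ Ioi y :=
          ((h2.and h3).filter_mono nhdsWithin_le_nhds).and eventually_mem_nhdsWithin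
        obtain ⟨u, ⟨hLu, hut⟩, hyu⟩ := h4.exists
        have huA : u ∈ A := Or.inr ⟨⟨hy0.trans (le_of_lt hyu), hut.le⟩, hLu.le⟩
        exact absurd (le_csSup hA_cpt.bddAbove huA) (not_le.mpr hyu)
      have : L y = v := le_antisymm hLy_le' hLy_ge
      rw [this, min_eq_left hvt.le, max_eq_left hv]

lemma map_restrict (L : StieltjesFunction ℝ) (hLc : Continuous L) (h0 : L 0 = 0)
    {t : ℝ} (ht : 0 ≤ t) :
    Measure.map L (L.measure.restrict (Ioc 0 t)) = volume.restrict (Ioc 0 (L t)) := by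
  have hLt0 : (0:ℝ) ≤ L t := h0 ▸ L.mono ht
  have hfin : L.measure.restrict (Ioc 0 t) univ < ⊤ := by
    rw [Measure.restrict_apply_univ, L.measure_Ioc]
    exact ENNReal.ofReal_lt_top
  haveI : IsFiniteMeasure (L.measure.restrict (Ioc 0 t)) := ⟨hfin⟩
  haveI : IsFiniteMeasure (Measure.map L (L.measure.restrict (Ioc 0 t))) :=
    Measure.isFiniteMeasure_map _ _
  refine Measure.ext_of_Ioc_finite _ _ ?_ (fun a b hab => ?_)
  · rw [Measure.map_apply hLc.measurable MeasurableSet.univ, preimage_univ,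
      Measure.restrict_apply_univ, Measure.restrict_apply_univ, L.measure_Ioc,
      Real.volume_Ioc, h0, sub_zero]
  · rw [Measure.map_apply hLc.measurable measurableSet_Ioc,
      Measure.restrict_apply (hLc.measurable measurableSet_Ioc),
      Measure.restrict_apply measurableSet_Ioc]
    obtain ⟨ya, ⟨hya0, hyat⟩, hiffa, hLya⟩ := exists_hitting L hLc h0 ht a
    obtain ⟨yb, ⟨hyb0, hybt⟩, hiffb, hLyb⟩ := exists_hitting L hLc h0 ht b
    have hset : L ⁻¹' Ioc a b ∩ Ioc 0 t = Ioc ya yb := by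
      ext u
      simp only [mem_inter_iff, mem_preimage, mem_Ioc]
      constructor
      · rintro ⟨⟨hau, hub⟩, hu1, hu2⟩
        refine ⟨?_, (hiffb u ⟨hu1, hu2⟩).mp hub⟩
        by_contra h
        push_neg at h
        exact absurd ((hiffa u ⟨hu1, hu2⟩).mpr h) (not_le.mpr hau)
      · rintro ⟨hya_u, hu_yb⟩
        have hu1 : 0 < u := lt_of_le_of_lt hya0 hya_u
        have hu2 : u ≤ t := hu_yb.trans hybt
        refine ⟨⟨?_, (hiffb u ⟨hu1, hu2⟩).mpr hu_yb⟩, hu1, hu2⟩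
        by_contra h
        push_neg at h
        exact absurd ((hiffa u ⟨hu1, hu2⟩).mp h) (not_le.mpr hya_u)
    rw [hset, L.measure_Ioc, hLya, hLyb, Ioc_inter_Ioc, Real.volume_Ioc]
    exact aux_ofReal (L t) a b

/-- Closed form for the repurchase strategy in the presence of an arbitrager:
with `L` continuous nondecreasing, `L = 0` on `(-∞,0]`, `α = 1 + c` and
`p = (1+q)(1+1/c)`,
`exp(-(1+q) ∫_{(0,t]} α (b + c L(u))⁻¹ dL(u)) = (1 + (c/b) L(t))^{-p}`. -/
theorem stmt10 (L : StieltjesFunction ℝ) (hLc : Continuous L)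
    (hL0 : ∀ u : ℝ, u ≤ 0 → L u = 0)
    (b c q : ℝ) (hb : 0 < b) (hc : 0 < c) (hq : 0 ≤ q)
    (α p : ℝ) (hα : α = 1 + c) (hp : p = (1 + q) * (1 + 1 / c)) :
    ∀ t : ℝ, 0 ≤ t →
      Real.exp (-((1 + q) *
          ∫ u in Set.Ioc (0:ℝ) t, α * (b + c * L u)⁻¹ ∂L.measure))
        = (1 + (c / b) * L t) ^ (-p) := by
  intro t ht
  have h0 : L 0 = 0 := hL0 0 le_rfl
  have hLt0 : (0:ℝ) ≤ L t := h0 ▸ L.mono ht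
  have hX : (0:ℝ) < 1 + c / b * L t := by positivity
  have hg : Measurable fun s : ℝ => α * (b + c * s)⁻¹ :=
    (measurable_const.mul
      ((measurable_const.add (measurable_const.mul measurable_id)).inv))
  have hint : ∫ u in Ioc (0:ℝ) t, α * (b + c * L u)⁻¹ ∂L.measure
      = ∫ s in Ioc (0:ℝ) (L t), α * (b + c * s)⁻¹ := by
    rw [← map_restrict L hLc h0 ht,
      integral_map hLc.aemeasurable hg.aestronglyMeasurable]
  have hval : ∫ s in Ioc (0:ℝ) (L t), α * (b + c * s)⁻¹
      = α / c * Real.log (1 + c / b * L t) := by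
    rw [← intervalIntegral.integral_of_le hLt0, intervalIntegral.integral_const_mul,
      intervalIntegral.integral_comp_add_mul (fun x => x⁻¹) hc.ne' b]
    have hpos : (0:ℝ) < b + c * L t := by positivity
    rw [mul_zero, add_zero, integral_inv_of_pos hb hpos]
    have : (b + c * L t) / b = 1 + c / b * L t := by field_simp
    rw [this, smul_eq_mul]
    ring
  rw [hint, hval, Real.rpow_def_of_pos hX]
  congr 1
  have hpc : (1 + q) * (α / c) = p := by
    rw [hα, hp, add_div, div_self hc.ne', one_div]
    ring
  rw [← mul_assoc, hpc]
  ring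
end

section
/- Let L : ℝ → ℝ be a continuous nondecreasing function with L(u) = 0 for u ≤ 0, let b > 0, c > 0, n₀ > 0 and p > 1. Define n(u) := n₀·(1 + (c/b)·L(u))^{−p} and m(u) := n₀ − n(u), so that m is continuous, nondecreasing and m(0) = 0. Then for every t ≥ 0, ∫_{(0,t]} ( b + c·L(u) ) d(μ_m)(u) = ( p/(p−1) )·n₀·b·( 1 − (1 + (c/b)·L(t))^{1−p} ). -/
open Set MeasureTheory

/-- Money spent to repurchase stocks: with `L` continuous nondecreasing,
`L = 0` on `(-∞,0]`, `n(u) = n₀ (1 + (c/b) L(u))^{-p}` and `m = n₀ - n`,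
`∫_{(0,t]} (b + c L(u)) dm(u)
  = (p/(p-1)) n₀ b (1 - (1 + (c/b) L(t))^{1-p})`. -/
theorem stmt11 (L : StieltjesFunction ℝ) (hLc : Continuous L)
    (hL0 : ∀ u : ℝ, u ≤ 0 → L u = 0)
    (b c n₀ p : ℝ) (hb : 0 < b) (hc : 0 < c) (hn₀ : 0 < n₀) (hp : 1 < p)
    (m : StieltjesFunction ℝ)
    (hm : ∀ u : ℝ, m u = n₀ - n₀ * (1 + (c / b) * L u) ^ (-p)) :
    ∀ t : ℝ, 0 ≤ t →
      (∫ u in Set.Ioc (0:ℝ) t, (b + c * L u) ∂m.measure)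
        = (p / (p - 1)) * n₀ * b * (1 - (1 + (c / b) * L t) ^ (1 - p)) := by
  intro t ht
  set q : ℝ := c / b with hq
  have hq0 : 0 < q := div_pos hc hb
  have hL00 : L 0 = 0 := hL0 0 le_rfl
  set g : ℝ → ℝ := fun y => n₀ - n₀ * (1 + q * y) ^ (-p) with hg
  set φ : ℝ → ℝ := fun x => n₀ * p * q * (1 + q * x) ^ (-p - 1) with hφ
  have hbase : ∀ x : ℝ, 0 ≤ x → (0:ℝ) < 1 + q * x := fun x hx => by positivity
  have hg0 : g 0 = 0 := by simp [hg]
  -- derivative of g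
  have hderiv : ∀ x : ℝ, 0 ≤ x → HasDerivAt g (φ x) x := by
    intro x hx
    have h1 : HasDerivAt (fun x : ℝ => 1 + q * x) q x := by
      simpa using ((hasDerivAt_id x).const_mul q).const_add 1
    have h2 := h1.rpow_const (p := -p) (Or.inl (hbase x hx).ne')
    have h3 := (h2.const_mul n₀).const_sub n₀
    refine h3.congr_deriv ?_
    simp only [hφ]; ring
  have hφcont : ∀ y : ℝ, 0 ≤ y → ContinuousOn φ (Icc 0 y) := by
    intro y hy
    apply ContinuousOn.mul continuousOn_const
    exact (continuous_const.add (continuous_const.mul continuous_id)).continuousOn.rpow_const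
      (fun x hx => Or.inl (hbase x hx.1).ne')
  have hφint : ∀ y : ℝ, 0 ≤ y → IntegrableOn φ (Ioc 0 y) := fun y hy =>
    ((hφcont y hy).integrableOn_Icc).mono_set Ioc_subset_Icc_self
  have hφnn : ∀ x : ℝ, 0 ≤ x → 0 ≤ φ x := by
    intro x hx
    have := (hbase x hx).le
    simp only [hφ]; positivity
  -- FTC for g
  have hA : ∀ y : ℝ, 0 ≤ y → ∫ x in Ioc (0:ℝ) y, φ x = g y := by
    intro y hy
    rw [← intervalIntegral.integral_of_le hy]
    have h := intervalIntegral.integral_eq_sub_of_hasDerivAt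
      (f := g) (f' := φ) (a := 0) (b := y)
      (fun x hx => hderiv x (by rw [uIcc_of_le hy] at hx; exact hx.1))
      (((hφcont y hy).mono (by rw [uIcc_of_le hy])).intervalIntegrable)
    rw [h, hg0, sub_zero]
  have hlint : ∀ y : ℝ, 0 ≤ y →
      (∫⁻ x in Ioc (0:ℝ) y, ENNReal.ofReal (φ x)) = ENNReal.ofReal (g y) := by
    intro y hy
    rw [← ofReal_integral_eq_lintegral_ofReal (hφint y hy)
      ((ae_restrict_iff' measurableSet_Ioc).2 (Filter.Eventually.of_forall
        (fun x hx => hφnn x hx.1.le))), hA y hy]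
  set T := L t with hT
  have hT0 : 0 ≤ T := by rw [hT, ← hL00]; exact L.mono ht
  have hLm : Measurable L := hLc.measurable
  haveI hfin : IsFiniteMeasure (m.measure.restrict (Ioc 0 t)) := by
    constructor
    rw [Measure.restrict_apply_univ, m.measure_Ioc]
    exact ENNReal.ofReal_lt_top
  haveI : IsFiniteMeasure (Measure.map L (m.measure.restrict (Ioc 0 t))) :=
    Measure.isFiniteMeasure_map _ _
  -- the key measure identity
  have key : Measure.map L (m.measure.restrict (Ioc 0 t))
      = (volume.restrict (Ioc 0 T)).withDensity (fun x => ENNReal.ofReal (φ x)) := by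
    refine Measure.ext_of_Iic _ _ (fun x => ?_)
    rw [Measure.map_apply hLm measurableSet_Iic,
      Measure.restrict_apply (hLm measurableSet_Iic),
      withDensity_apply _ measurableSet_Iic,
      Measure.restrict_restrict measurableSet_Iic, Set.inter_comm (Iic x) (Ioc 0 T), Set.Ioc_inter_Iic]
    rcases lt_or_ge x 0 with hx | hx
    · have h1 : ⇑L ⁻¹' Iic x ∩ Ioc 0 t = ∅ := by
        apply eq_empty_iff_forall_notMem.2
        rintro u ⟨hux, h0u, -⟩
        have hux' : L u ≤ x := hux
        have h0L : (0:ℝ) ≤ L u := by rw [← hL00]; exact L.mono h0u.le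
        linarith
      have h2 : Ioc (0:ℝ) (T ⊓ x) = ∅ := Ioc_eq_empty (by
        intro h
        have : T ⊓ x ≤ x := inf_le_right
        linarith)
      rw [h1, h2]
      simp
    · -- main case
      set S := Icc 0 t ∩ ⇑L ⁻¹' Iic x with hS
      have hScpt : IsCompact S :=
        isCompact_Icc.inter_right (isClosed_Iic.preimage hLc)
      have h0S : (0:ℝ) ∈ S := ⟨⟨le_rfl, ht⟩, by simp only [mem_preimage, mem_Iic, hL00]; exact hx⟩
      set s := sSup S with hs
      have hsS : s ∈ S := hScpt.sSup_mem ⟨0, h0S⟩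
      obtain ⟨⟨hs0, hst⟩, hsx⟩ := hsS
      rw [mem_preimage, mem_Iic] at hsx
      have hub : ∀ u ∈ S, u ≤ s := fun u hu => le_csSup hScpt.bddAbove hu
      have hLs : L s = min x T := by
        refine le_antisymm (le_min hsx (L.mono hst)) ?_
        have hmem : min x T ∈ Icc (L 0) (L t) := by
          rw [hL00]; exact ⟨le_min hx hT0, min_le_right _ _⟩
        obtain ⟨u, huI, hLu⟩ := intermediate_value_Icc ht hLc.continuousOn hmem
        have huS : u ∈ S := ⟨huI, by
          rw [mem_preimage, mem_Iic, hLu]; exact min_le_left _ _⟩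
        calc min x T = L u := hLu.symm
          _ ≤ L s := L.mono (hub u huS)
      have hset : ⇑L ⁻¹' Iic x ∩ Ioc 0 t = Ioc 0 s := by
        ext u
        simp only [mem_inter_iff, mem_preimage, mem_Iic, mem_Ioc]
        constructor
        · rintro ⟨hux, hu0, hut⟩
          exact ⟨hu0, hub u ⟨⟨hu0.le, hut⟩, hux⟩⟩
        · rintro ⟨hu0, hus⟩
          exact ⟨(L.mono hus).trans hsx, hu0, hus.trans hst⟩
      rw [hset, m.measure_Ioc, hlint (T ⊓ x) (le_min hT0 hx)]
      have hm0 : m 0 = 0 := by rw [hm 0, hL00]; simp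
      have : m s = g (min x T) := by rw [hm s, ← hLs]
      rw [hm0, sub_zero, this, min_comm T x]
  -- second antiderivative
  have hp1 : p - 1 ≠ 0 := by linarith
  have hb0 : b ≠ 0 := hb.ne'
  set G : ℝ → ℝ := fun y => p / (p - 1) * n₀ * b * (1 - (1 + q * y) ^ (1 - p)) with hG
  set ψ : ℝ → ℝ := fun x => n₀ * p * c * (1 + q * x) ^ (-p) with hψ
  have hderivG : ∀ x : ℝ, 0 ≤ x → HasDerivAt G (ψ x) x := by
    intro x hx
    have h1 : HasDerivAt (fun x : ℝ => 1 + q * x) q x := by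
      simpa using ((hasDerivAt_id x).const_mul q).const_add 1
    have h2 := h1.rpow_const (p := 1 - p) (Or.inl (hbase x hx).ne')
    have h3 := (h2.const_sub 1).const_mul (p / (p - 1) * n₀ * b)
    have hexp : 1 - p - 1 = -p := by ring
    rw [hexp] at h3
    refine h3.congr_deriv ?_
    simp only [hψ, hq]
    field_simp
    ring
  have hψcont : ContinuousOn ψ (Icc 0 T) := by
    apply ContinuousOn.mul continuousOn_const
    exact (continuous_const.add (continuous_const.mul continuous_id)).continuousOn.rpow_const
      (fun x hx => Or.inl (hbase x hx.1).ne')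
  have hB : ∫ x in Ioc (0:ℝ) T, ψ x = G T := by
    rw [← intervalIntegral.integral_of_le hT0]
    have h := intervalIntegral.integral_eq_sub_of_hasDerivAt
      (f := G) (f' := ψ) (a := 0) (b := T)
      (fun x hx => hderivG x (by rw [uIcc_of_le hT0] at hx; exact hx.1))
      ((hψcont.mono (by rw [uIcc_of_le hT0])).intervalIntegrable)
    have hG0 : G 0 = 0 := by simp [hG]
    rw [h, hG0, sub_zero]
  have hmeas : Measurable fun x : ℝ => (φ x).toNNReal := by
    apply Measurable.real_toNNReal
    simp only [hφ]
    fun_prop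
  have hfs : AEStronglyMeasurable (fun x : ℝ => b + c * x)
      (Measure.map L (m.measure.restrict (Ioc 0 t))) :=
    (continuous_const.add (continuous_const.mul continuous_id)).aestronglyMeasurable
  calc (∫ u in Ioc (0:ℝ) t, (b + c * L u) ∂m.measure)
      = ∫ y, (b + c * y) ∂(Measure.map L (m.measure.restrict (Ioc 0 t))) :=
        (integral_map hLm.aemeasurable hfs).symm
    _ = ∫ y, (b + c * y)
          ∂((volume.restrict (Ioc 0 T)).withDensity fun x => ENNReal.ofReal (φ x)) := by
        rw [key]
    _ = ∫ x in Ioc (0:ℝ) T, (φ x).toNNReal • (b + c * x) :=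
        integral_withDensity_eq_integral_smul hmeas _
    _ = ∫ x in Ioc (0:ℝ) T, ψ x := by
        refine setIntegral_congr_fun measurableSet_Ioc (fun x hx => ?_)
        have hx0 : (0:ℝ) ≤ x := hx.1.le
        have hz : (0:ℝ) < 1 + q * x := hbase x hx0
        rw [NNReal.smul_def, Real.coe_toNNReal _ (hφnn x hx0)]
        have hpow : (1 + q * x) * ((1 + q * x) ^ (-p - 1)) = (1 + q * x) ^ (-p) := by
          have h := Real.rpow_add hz 1 (-p - 1)
          rw [Real.rpow_one] at h
          rw [← h]
          norm_num
        simp only [hφ, hψ]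
        rw [← hpow, hq]
        field_simp
        rw [smul_eq_mul]
        field_simp
    _ = G T := hB
    _ = p / (p - 1) * n₀ * b * (1 - (1 + q * T) ^ (1 - p)) := by rw [hG]
end

section
/- Let L : ℝ → ℝ be a continuous nondecreasing function with L(u) = 0 for u ≤ 0, let b > 0, c > 0, n₀ > 0 and q ≥ 0. Set α := 1 + c and p := (1+q)·(1 + 1/c), define n(u) := n₀·(1 + (c/b)·L(u))^{−p} and m(u) := n₀ − n(u). Then for every t ≥ 0, ∫_{(0,t]} ( b + c·L(u) ) d(μ_m)(u) = (1+q)·α·∫_{(0,t]} n(u) d(μ_L)(u), both sides being equal to ( p/(p−1) )·n₀·b·( 1 − (1 + (c/b)·L(t))^{1−p} ). -/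
open Set MeasureTheory
open scoped ENNReal NNReal


lemma stieltjes_map_comp (L g h : StieltjesFunction ℝ) (hLc : Continuous L)
    (hh : ∀ u, h u = g (L u)) (a t : ℝ) (hat : a ≤ t) :
    Measure.map L (h.measure.restrict (Set.Ioc a t)) =
      g.measure.restrict (Set.Ioc (L a) (L t)) := by
  set τ : ℝ → ℝ := fun z => sSup ({a} ∪ {u ∈ Icc a t | L u ≤ z}) with hτdef
  have hBdd : ∀ z, BddAbove ({a} ∪ {u ∈ Icc a t | L u ≤ z}) := fun z =>
    ⟨t, by rintro u (rfl | ⟨⟨_, hu⟩, _⟩); exacts [hat, hu]⟩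
  have hne : ∀ z : ℝ, ({a} ∪ {u ∈ Icc a t | L u ≤ z}).Nonempty := fun z => ⟨a, Or.inl rfl⟩
  have hclosed : ∀ z : ℝ, IsClosed ({a} ∪ {u ∈ Icc a t | L u ≤ z}) := by
    intro z
    have : {u ∈ Icc a t | L u ≤ z} = Icc a t ∩ {u | L u ≤ z} := rfl
    rw [this]
    exact isClosed_singleton.union (isClosed_Icc.inter (isClosed_le hLc continuous_const))
  have hτmem : ∀ z, τ z ∈ ({a} ∪ {u ∈ Icc a t | L u ≤ z}) := fun z =>
    (hclosed z).csSup_mem (hne z) (hBdd z)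
  have hτa : ∀ z, a ≤ τ z := fun z => le_csSup (hBdd z) (Or.inl rfl)
  have hτt : ∀ z, τ z ≤ t := fun z => csSup_le (hne z) (by
    rintro u (rfl | ⟨⟨_, hu⟩, _⟩); exacts [hat, hu])
  have hLτ_le : ∀ z, L a ≤ z → L (τ z) ≤ z := by
    intro z hz
    rcases hτmem z with h1 | h2
    · rw [h1]; exact hz
    · exact h2.2
  have hτa' : ∀ z, z < L a → τ z = a := by
    intro z hz
    have : ({a} ∪ {u ∈ Icc a t | L u ≤ z}) = {a} := by
      apply Set.eq_singleton_iff_unique_mem.2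
      refine ⟨Or.inl rfl, ?_⟩
      rintro u (rfl | ⟨⟨hu, _⟩, hu2⟩)
      · rfl
      · exact absurd (lt_of_le_of_lt hu2 hz) (not_lt.2 (L.mono hu))
    rw [hτdef]; simp only [this, csSup_singleton]
  have key1 : ∀ z : ℝ, ∀ u ∈ Ioc a t, (L u ≤ z ↔ u ≤ τ z) := by
    intro z u hu
    constructor
    · intro hLu
      exact le_csSup (hBdd z) (Or.inr ⟨⟨hu.1.le, hu.2⟩, hLu⟩)
    · intro huτ
      rcases lt_or_ge z (L a) with hz | hz
      · rw [hτa' z hz] at huτ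
        exact absurd huτ (not_le.2 hu.1)
      · exact (L.mono huτ).trans (hLτ_le z hz)
  have key2 : ∀ z : ℝ, L (τ z) = max (L a) (min z (L t)) := by
    intro z
    rcases lt_or_ge z (L a) with hz | hz
    · rw [hτa' z hz]
      have : min z (L t) ≤ L a := le_trans (min_le_left _ _) hz.le
      rw [max_eq_left this]
    · rcases le_or_gt (L t) z with hzt | hzt
      · have htmem : t ∈ ({a} ∪ {u ∈ Icc a t | L u ≤ z}) := Or.inr ⟨⟨hat, le_rfl⟩, hzt⟩
        have : τ z = t := le_antisymm (hτt z) (le_csSup (hBdd z) htmem)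
        rw [this, min_eq_right hzt, max_eq_right (L.mono hat)]
      · obtain ⟨u, hu, hLu⟩ := intermediate_value_Icc hat hLc.continuousOn ⟨hz, hzt.le⟩
        have hu_le : u ≤ τ z := le_csSup (hBdd z) (Or.inr ⟨hu, hLu.le⟩)
        have h1 : z ≤ L (τ z) := hLu.ge.trans (L.mono hu_le)
        have h2 : L (τ z) ≤ z := hLτ_le z hz
        rw [le_antisymm h2 h1, min_eq_left hzt.le, max_eq_right hz]
  have hpre : ∀ x y : ℝ, L ⁻¹' (Ioc x y) ∩ Ioc a t = Ioc (τ x) (τ y) := by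
    intro x y
    ext u
    simp only [mem_inter_iff, mem_preimage, mem_Ioc]
    constructor
    · rintro ⟨⟨hx, hy⟩, hu⟩
      refine ⟨not_le.1 fun hle => not_le.2 hx ((key1 x u hu).2 hle), (key1 y u hu).1 hy⟩
    · rintro ⟨h1, h2⟩
      have hu : u ∈ Ioc a t := ⟨lt_of_le_of_lt (hτa x) h1, h2.trans (hτt y)⟩
      refine ⟨⟨not_le.1 fun hle => not_le.2 h1 ((key1 x u hu).1 hle), (key1 y u hu).2 h2⟩,
        hu.1, hu.2⟩
  have hval : ∀ x y : ℝ,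
      Measure.map L (h.measure.restrict (Set.Ioc a t)) (Ioc x y)
        = g.measure.restrict (Set.Ioc (L a) (L t)) (Ioc x y) := by
    intro x y
    rw [Measure.map_apply hLc.measurable measurableSet_Ioc,
      Measure.restrict_apply (hLc.measurable measurableSet_Ioc), hpre,
      StieltjesFunction.measure_Ioc, hh, hh, key2, key2,
      Measure.restrict_apply measurableSet_Ioc, Ioc_inter_Ioc,
      StieltjesFunction.measure_Ioc]
    have hAB : L a ≤ L t := L.mono hat
    rcases le_or_gt x (L t) with hxB | hxB
    · rcases le_or_gt (L a) y with hAy | hAy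
      · rw [min_eq_left hxB, max_eq_right (le_min hAy hAB), max_comm (L a) x,
          max_comm x (L a)]
      · have e1 : max (L a) (min y (L t)) = L a :=
          max_eq_left ((min_le_left _ _).trans hAy.le)
        rw [e1, ENNReal.ofReal_of_nonpos, ENNReal.ofReal_of_nonpos]
        · exact sub_nonpos.2 (g.mono ((min_le_left y (L t)).trans
            (hAy.le.trans (le_max_right x (L a)))))
        · exact sub_nonpos.2 (g.mono (le_max_left _ _))
    · have e1 : max (L a) (min x (L t)) = L t := by
        rw [min_eq_right hxB.le, max_eq_right hAB]
      rw [e1, ENNReal.ofReal_of_nonpos, ENNReal.ofReal_of_nonpos]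
      · exact sub_nonpos.2 (g.mono ((min_le_right y (L t)).trans
          (hxB.le.trans (le_max_left x (L a)))))
      · exact sub_nonpos.2 (g.mono (max_le (L.mono hat) (min_le_right _ _)))
  refine Measure.ext_of_Ioc' _ _ (fun x y _ => ?_) (fun x y _ => hval x y)
  rw [hval x y, Measure.restrict_apply measurableSet_Ioc, Ioc_inter_Ioc,
    StieltjesFunction.measure_Ioc]
  exact ENNReal.ofReal_ne_top

lemma stieltjes_integral_comp (L g h : StieltjesFunction ℝ) (hLc : Continuous L)
    (hh : ∀ u, h u = g (L u)) (a t : ℝ) (hat : a ≤ t) (F : ℝ → ℝ) (hF : Measurable F) :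
    ∫ u in Set.Ioc a t, F (L u) ∂h.measure = ∫ x in Set.Ioc (L a) (L t), F x ∂g.measure := by
  rw [← stieltjes_map_comp L g h hLc hh a t hat,
    integral_map hLc.measurable.aemeasurable hF.aestronglyMeasurable]


lemma stieltjes_integral_density (g : StieltjesFunction ℝ) (ψ D F : ℝ → ℝ) (s : ℝ) (hs : 0 ≤ s)
    (hψ : ∀ x ∈ Set.Icc 0 s, g x = ψ x)
    (hD : Continuous D) (hDpos : ∀ x ∈ Set.Icc 0 s, 0 ≤ D x)
    (hderiv : ∀ x ∈ Set.Icc 0 s, HasDerivAt ψ (D x) x) :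
    ∫ x in Set.Ioc 0 s, F x ∂g.measure = ∫ x in (0:ℝ)..s, F x * D x := by
  have hmeas : g.measure.restrict (Set.Ioc 0 s)
      = (volume.withDensity (fun x => ((D x).toNNReal : ℝ≥0∞))).restrict (Set.Ioc 0 s) := by
    refine Measure.ext_of_Ioc' _ _ (fun x y _ => ?_) (fun x y _ => ?_)
    · rw [Measure.restrict_apply measurableSet_Ioc, Ioc_inter_Ioc,
        StieltjesFunction.measure_Ioc]
      exact ENNReal.ofReal_ne_top
    · rw [Measure.restrict_apply measurableSet_Ioc, Ioc_inter_Ioc,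
        StieltjesFunction.measure_Ioc, Measure.restrict_apply measurableSet_Ioc,
        Ioc_inter_Ioc, withDensity_apply _ measurableSet_Ioc]
      set X := max x 0 with hX
      set Y := min y s with hY
      rcases le_or_gt Y X with hYX | hXY
      · rw [Set.Ioc_eq_empty (not_lt.2 hYX), ENNReal.ofReal_of_nonpos (sub_nonpos.2 (g.mono hYX))]
        simp
      · have hXm : X ∈ Icc (0:ℝ) s := ⟨le_max_right _ _, hXY.le.trans (min_le_right _ _)⟩
        have hYm : Y ∈ Icc (0:ℝ) s := ⟨(le_max_right x 0).trans hXY.le, min_le_right _ _⟩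
        have hsub : Set.Ioc X Y ⊆ Set.Icc 0 s := fun u hu =>
          ⟨hXm.1.trans hu.1.le, hu.2.trans hYm.2⟩
        have hInt : IntegrableOn D (Set.Ioc X Y) := hD.integrableOn_Ioc
        have hnn : 0 ≤ᵐ[volume.restrict (Set.Ioc X Y)] D := by
          rw [Filter.EventuallyLE, ae_restrict_iff' measurableSet_Ioc]
          exact Filter.Eventually.of_forall fun u hu => hDpos u (hsub hu)
        have hco : ∀ a : ℝ, ((D a).toNNReal : ℝ≥0∞) = ENNReal.ofReal (D a) := fun a => rfl
        simp only [hco]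
        rw [hψ X hXm, hψ Y hYm, ← ofReal_integral_eq_lintegral_ofReal hInt hnn]
        congr 1
        rw [← intervalIntegral.integral_of_le hXY.le]
        exact (intervalIntegral.integral_eq_sub_of_hasDerivAt
          (fun u hu => hderiv u (by
            rw [uIcc_of_le hXY.le] at hu
            exact ⟨hXm.1.trans hu.1, hu.2.trans hYm.2⟩))
          (hD.intervalIntegrable _ _)).symm
  rw [hmeas, restrict_withDensity measurableSet_Ioc,
    integral_withDensity_eq_integral_smul (hD.measurable.real_toNNReal) F,
    intervalIntegral.integral_of_le hs]
  refine setIntegral_congr_fun measurableSet_Ioc fun u hu => ?_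
  have h0 : 0 ≤ D u := hDpos u ⟨hu.1.le, hu.2⟩
  simp [NNReal.smul_def, Real.coe_toNNReal _ h0, mul_comm]


/-- Zero-sum constraint in the presence of an arbitrager: with `L` continuous
nondecreasing, `L = 0` on `(-∞,0]`, `α = 1 + c`, `p = (1+q)(1+1/c)`,
`n(u) = n₀ (1 + (c/b) L(u))^{-p}` and `m = n₀ - n`,
`∫_{(0,t]} (b + c L(u)) dm(u) = (1+q) α ∫_{(0,t]} n(u) dL(u)`,
both sides being equal to `(p/(p-1)) n₀ b (1 - (1 + (c/b) L(t))^{1-p})`. -/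
theorem stmt12 (L : StieltjesFunction ℝ) (hLc : Continuous L)
    (hL0 : ∀ u : ℝ, u ≤ 0 → L u = 0)
    (b c n₀ q : ℝ) (hb : 0 < b) (hc : 0 < c) (hn₀ : 0 < n₀) (hq : 0 ≤ q)
    (α p : ℝ) (hα : α = 1 + c) (hp : p = (1 + q) * (1 + 1 / c))
    (m : StieltjesFunction ℝ)
    (hm : ∀ u : ℝ, m u = n₀ - n₀ * (1 + (c / b) * L u) ^ (-p)) :
    ∀ t : ℝ, 0 ≤ t →
      (∫ u in Set.Ioc (0:ℝ) t, (b + c * L u) ∂m.measure)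
          = (1 + q) * α *
            ∫ u in Set.Ioc (0:ℝ) t, n₀ * (1 + (c / b) * L u) ^ (-p) ∂L.measure
        ∧
      (∫ u in Set.Ioc (0:ℝ) t, (b + c * L u) ∂m.measure)
          = (p / (p - 1)) * n₀ * b * (1 - (1 + (c / b) * L t) ^ (1 - p)) := by
  intro t ht
  have hL0' : L 0 = 0 := hL0 0 le_rfl
  have hLnn : ∀ u, 0 ≤ L u := by
    intro u
    rcases le_total u 0 with h | h
    · rw [hL0 u h]
    · rw [← hL0']; exact L.mono h
  set s := L t with hsdef
  have hs : 0 ≤ s := hLnn t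
  have hcb : (0:ℝ) < c / b := by positivity
  have hp1 : 1 < p := by
    rw [hp]
    have h1 : (0:ℝ) < 1 / c := by positivity
    nlinarith
  have hbase : ∀ x : ℝ, 0 ≤ x → (0:ℝ) < 1 + (c / b) * x := by
    intro x hx
    have : 0 ≤ (c / b) * x := by positivity
    linarith
  -- the Stieltjes function φ with m = φ ∘ L
  have hφmono : Monotone (fun x : ℝ => n₀ - n₀ * (1 + (c / b) * max x 0) ^ (-p)) := by
    intro x y hxy
    have h1 : (0:ℝ) < 1 + (c / b) * max x 0 := hbase _ (le_max_right _ _)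
    have h2 : (0:ℝ) < 1 + (c / b) * max y 0 := hbase _ (le_max_right _ _)
    have h3 : (1 + (c / b) * max x 0) ≤ (1 + (c / b) * max y 0) := by
      have hm := max_le_max hxy (le_refl (0:ℝ))
      nlinarith
    have h4 : (1 + (c / b) * max y 0) ^ (-p) ≤ (1 + (c / b) * max x 0) ^ (-p) := by
      rw [Real.rpow_neg h1.le, Real.rpow_neg h2.le]
      exact inv_anti₀ (Real.rpow_pos_of_pos h1 p)
        (Real.rpow_le_rpow h1.le h3 (by linarith))
    have := mul_le_mul_of_nonneg_left h4 hn₀.le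
    simp only
    linarith
  have hφcont : Continuous (fun x : ℝ => n₀ - n₀ * (1 + (c / b) * max x 0) ^ (-p)) := by
    refine continuous_const.sub (continuous_const.mul ?_)
    refine Continuous.rpow_const ?_ fun x => Or.inl (ne_of_gt (hbase _ (le_max_right _ _)))
    exact continuous_const.add (continuous_const.mul (continuous_id.max continuous_const))
  set φ : StieltjesFunction ℝ :=
    ⟨fun x => n₀ - n₀ * (1 + (c / b) * max x 0) ^ (-p), hφmono,
      fun x => hφcont.continuousAt.continuousWithinAt⟩ with hφdef
  have hhφ : ∀ u, m u = φ (L u) := by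
    intro u
    show m u = n₀ - n₀ * (1 + (c / b) * max (L u) 0) ^ (-p)
    rw [max_eq_left (hLnn u), hm u]
  have hhid : ∀ u : ℝ, L u = StieltjesFunction.id (L u) := fun u => rfl
  -- measurability of the second integrand
  have hF2m : Measurable (fun x : ℝ => n₀ * (1 + (c / b) * x) ^ (-p)) := by
    fun_prop
  -- change of variables
  have h1 := stieltjes_integral_comp L φ m hLc hhφ 0 t ht (fun x => b + c * x)
    (by fun_prop)
  have h2 := stieltjes_integral_comp L StieltjesFunction.id L hLc hhid 0 t ht
    (fun x => n₀ * (1 + (c / b) * x) ^ (-p)) hF2m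
  rw [hL0'] at h1 h2
  -- densities
  set D1 : ℝ → ℝ := fun x => n₀ * p * (c / b) * (1 + (c / b) * max x 0) ^ (-p - 1) with hD1def
  have hD1cont : Continuous D1 := by
    refine continuous_const.mul ?_
    refine Continuous.rpow_const ?_ fun x => Or.inl (ne_of_gt (hbase _ (le_max_right _ _)))
    exact continuous_const.add (continuous_const.mul (continuous_id.max continuous_const))
  have hD1pos : ∀ x ∈ Set.Icc (0:ℝ) s, 0 ≤ D1 x := by
    intro x hx
    have := Real.rpow_pos_of_pos (hbase _ (le_max_right x 0)) (-p - 1)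
    positivity
  have hψ1 : ∀ x ∈ Set.Icc (0:ℝ) s, φ x = (fun x => n₀ - n₀ * (1 + (c / b) * x) ^ (-p)) x := by
    intro x hx
    show n₀ - n₀ * (1 + (c / b) * max x 0) ^ (-p) = _
    rw [max_eq_left hx.1]
  have hderiv1 : ∀ x ∈ Set.Icc (0:ℝ) s,
      HasDerivAt (fun x => n₀ - n₀ * (1 + (c / b) * x) ^ (-p)) (D1 x) x := by
    intro x hx
    have hA : (0:ℝ) < 1 + (c / b) * x := hbase x hx.1
    have hlin : HasDerivAt (fun y : ℝ => 1 + (c / b) * y) (c / b) x := by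
      simpa using ((hasDerivAt_id x).const_mul (c / b)).const_add 1
    have hr := hlin.rpow_const (p := -p) (Or.inl hA.ne')
    have := (hr.const_mul n₀).const_sub n₀
    convert this using 1
    · rfl
    · rfl
    rw [hD1def]
    simp only [max_eq_left hx.1]
    ring
  have hd1 := stieltjes_integral_density φ (fun x => n₀ - n₀ * (1 + (c / b) * x) ^ (-p)) D1
    (fun x => b + c * x) s hs hψ1 hD1cont hD1pos hderiv1
  have hd2 := stieltjes_integral_density StieltjesFunction.id (fun x => x) (fun _ => 1)
    (fun x => n₀ * (1 + (c / b) * x) ^ (-p)) s hs (fun x _ => rfl) continuous_const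
    (fun x _ => zero_le_one) (fun x _ => hasDerivAt_id x)
  -- compute the interval integrals
  have hIcc : Set.uIcc (0:ℝ) s = Set.Icc 0 s := uIcc_of_le hs
  have hP : ∀ x ∈ Set.uIcc (0:ℝ) s,
      HasDerivAt (fun y => (b / (c * (1 - p))) * (1 + (c / b) * y) ^ (1 - p))
        ((1 + (c / b) * x) ^ (-p)) x := by
    intro x hx
    rw [hIcc] at hx
    have hA : (0:ℝ) < 1 + (c / b) * x := hbase x hx.1
    have hlin : HasDerivAt (fun y : ℝ => 1 + (c / b) * y) (c / b) x := by
      simpa using ((hasDerivAt_id x).const_mul (c / b)).const_add 1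
    have hr := hlin.rpow_const (p := 1 - p) (Or.inl hA.ne')
    have := hr.const_mul (b / (c * (1 - p)))
    convert this using 1
    · rfl
    · rfl
    have h1p : (1:ℝ) - p ≠ 0 := by intro h; nlinarith
    have : (1:ℝ) - p - 1 = -p := by ring
    rw [this]
    field_simp
  have hIint : IntervalIntegrable (fun x : ℝ => (1 + (c / b) * x) ^ (-p)) volume 0 s := by
    apply ContinuousOn.intervalIntegrable
    apply ContinuousOn.rpow_const
    · exact (continuousOn_const.add (continuousOn_const.mul continuousOn_id))
    · intro x hx
      rw [hIcc] at hx
      exact Or.inl (ne_of_gt (hbase x hx.1))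
  have hJ : ∫ x in (0:ℝ)..s, (1 + (c / b) * x) ^ (-p)
      = (b / (c * (1 - p))) * ((1 + (c / b) * s) ^ (1 - p) - 1) := by
    rw [intervalIntegral.integral_eq_sub_of_hasDerivAt hP hIint]
    have : (1:ℝ) + (c / b) * 0 = 1 := by ring
    rw [this, Real.one_rpow]
    ring
  set J := ∫ x in (0:ℝ)..s, (1 + (c / b) * x) ^ (-p) with hJdef
  -- simplify the two interval integrals
  have he1 : ∫ x in (0:ℝ)..s, (b + c * x) * D1 x = n₀ * p * c * J := by
    rw [hJdef, ← intervalIntegral.integral_const_mul]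
    apply intervalIntegral.integral_congr
    intro x hx
    rw [hIcc] at hx
    have hA : (0:ℝ) < 1 + (c / b) * x := hbase x hx.1
    have e1 : (1 + (c / b) * x) * (1 + (c / b) * x) ^ (-p - 1) = (1 + (c / b) * x) ^ (-p) := by
      have h := Real.rpow_add hA 1 (-p - 1)
      rw [Real.rpow_one] at h
      rw [← h]
      norm_num
    have e2 : b + c * x = b * (1 + (c / b) * x) := by
      field_simp
    rw [hD1def]
    simp only [max_eq_left hx.1]
    calc (b + c * x) * (n₀ * p * (c / b) * (1 + (c / b) * x) ^ (-p - 1))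
        = n₀ * p * (b * (c / b)) * ((1 + (c / b) * x) * (1 + (c / b) * x) ^ (-p - 1)) := by
          rw [e2]; ring
      _ = n₀ * p * c * (1 + (c / b) * x) ^ (-p) := by
          rw [e1]
          have : b * (c / b) = c := by field_simp
          rw [this]
  have he2 : ∫ x in (0:ℝ)..s, (n₀ * (1 + (c / b) * x) ^ (-p)) * 1 = n₀ * J := by
    rw [hJdef, ← intervalIntegral.integral_const_mul]
    apply intervalIntegral.integral_congr
    intro x _
    ring
  have hLHS : (∫ u in Set.Ioc (0:ℝ) t, (b + c * L u) ∂m.measure) = n₀ * p * c * J := by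
    calc (∫ u in Set.Ioc (0:ℝ) t, (b + c * L u) ∂m.measure)
        = ∫ x in Set.Ioc (0:ℝ) s, (fun x => b + c * x) x ∂φ.measure := h1
      _ = ∫ x in (0:ℝ)..s, (b + c * x) * D1 x := hd1
      _ = n₀ * p * c * J := he1
  have hRHS : (∫ u in Set.Ioc (0:ℝ) t, n₀ * (1 + (c / b) * L u) ^ (-p) ∂L.measure)
      = n₀ * J := by
    calc (∫ u in Set.Ioc (0:ℝ) t, n₀ * (1 + (c / b) * L u) ^ (-p) ∂L.measure)
        = ∫ x in Set.Ioc (0:ℝ) s, (fun x => n₀ * (1 + (c / b) * x) ^ (-p)) x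
            ∂StieltjesFunction.id.measure := h2
      _ = ∫ x in (0:ℝ)..s, (n₀ * (1 + (c / b) * x) ^ (-p)) * 1 := hd2
      _ = n₀ * J := he2
  have hpm1 : p - 1 ≠ 0 := by intro h; nlinarith
  have h1p : (1:ℝ) - p ≠ 0 := by intro h; nlinarith
  constructor
  · rw [hLHS, hRHS]
    have hpc : p * c = (1 + q) * α := by
      rw [hp, hα]
      linear_combination (1 + q) * mul_inv_cancel₀ (ne_of_gt hc)
    linear_combination n₀ * J * hpc
  · rw [hLHS, hJ]
    have hcne : c ≠ 0 := hc.ne'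
    field_simp
    ring
end
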